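/- arXiv:1708.05363 — 6 statements merged into one kernel-verified Lean document; each statement's English description precedes it below -/
import Mathlib

section
/- Let I and J be finite index sets (the channels inflowing into and outflowing from a junction node). For each channel end m ∈ I ∪ J suppose given Δx_m > 0, Ā_m ≥ 0, interface data A⁻_m, A⁺_m ≥ 0, u⁻_m, u⁺_m, c⁻_m, c⁺_m ≥ 0, one-sided local speeds a⁺_m = max{0, u⁺_m + c⁺_m, u⁻_m + c⁻_m}, a⁻_m = min{0, u⁺_m − c⁺_m, u⁻_m − c⁻_m} with a⁺_m − a⁻_m > 0, and central-upwind mass flux H_m = (a⁺_m u⁻_m A⁻_m − a⁻_m u⁺_m A⁺_m)/(a⁺_m − a⁻_m) + a⁺_m a⁻_m (A⁺_m − A⁻_m)/(a⁺_m − a⁻_m). If Δt ≥ 0 satisfies Δx_i Ā_i + Δt·a⁻_i A⁺_i ≥ 0 for every i ∈ I and Δx_j Ā_j − Δt·a⁺_j A⁻_j ≥ 0 for every j ∈ J, then ∑_{i∈I} Δx_i Ā_i + ∑_{j∈J} Δx_j Ā_j + Δt·∑_{i∈I} H_i − Δt·∑_{j∈J} H_j ≥ 0. -/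
/-- Junction-node part of the positivity-preserving theorem: if
`Δx_i Ā_i + Δt a⁻_i A⁺_i ≥ 0` for each inflowing channel end `i ∈ I` and
`Δx_j Ā_j - Δt a⁺_j A⁻_j ≥ 0` for each outflowing channel end `j ∈ J`, then the updated
total water volume around the node,
`∑_{i∈I} Δx_i Ā_i + ∑_{j∈J} Δx_j Ā_j + Δt ∑_{i∈I} H_i - Δt ∑_{j∈J} H_j`, is nonnegative. -/
theorem stmt2 {ι : Type*} [DecidableEq ι] (I J : Finset ι)
    (Δx Abar Am Ap um up cm cp ap am H : ι → ℝ)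
    (hΔx : ∀ m ∈ I ∪ J, 0 < Δx m) (hAbar : ∀ m ∈ I ∪ J, 0 ≤ Abar m)
    (hAm : ∀ m ∈ I ∪ J, 0 ≤ Am m) (hAp : ∀ m ∈ I ∪ J, 0 ≤ Ap m)
    (hcm : ∀ m ∈ I ∪ J, 0 ≤ cm m) (hcp : ∀ m ∈ I ∪ J, 0 ≤ cp m)
    (hap : ∀ m ∈ I ∪ J, ap m = max 0 (max (up m + cp m) (um m + cm m)))
    (ham : ∀ m ∈ I ∪ J, am m = min 0 (min (up m - cp m) (um m - cm m)))
    (hpos : ∀ m ∈ I ∪ J, 0 < ap m - am m)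
    (hH : ∀ m ∈ I ∪ J, H m = (ap m * um m * Am m - am m * up m * Ap m) / (ap m - am m)
        + ap m * am m * (Ap m - Am m) / (ap m - am m))
    (Δt : ℝ) (hΔt : 0 ≤ Δt)
    (hin : ∀ i ∈ I, 0 ≤ Δx i * Abar i + Δt * am i * Ap i)
    (hout : ∀ j ∈ J, 0 ≤ Δx j * Abar j - Δt * ap j * Am j) :
    0 ≤ (∑ i ∈ I, Δx i * Abar i) + (∑ j ∈ J, Δx j * Abar j)
        + Δt * (∑ i ∈ I, H i) - Δt * (∑ j ∈ J, H j) := by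
  have bounds : ∀ m ∈ I ∪ J, am m * Ap m ≤ H m ∧ H m ≤ ap m * Am m := by
    intro m hm
    have hd := hpos m hm
    have hAm0 := hAm m hm
    have hAp0 := hAp m hm
    have hcm0 := hcm m hm
    have hcp0 := hcp m hm
    have hapm := hap m hm
    have hamm := ham m hm
    have hap0 : 0 ≤ ap m := hapm ▸ le_max_left _ _
    have ham0 : am m ≤ 0 := hamm ▸ min_le_left _ _
    have h1 : am m ≤ up m - cp m :=
      hamm ▸ le_trans (min_le_right _ _) (min_le_left _ _)
    have h2 : am m ≤ um m - cm m :=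
      hamm ▸ le_trans (min_le_right _ _) (min_le_right _ _)
    have h3 : up m + cp m ≤ ap m :=
      hapm ▸ le_trans (le_max_left _ _) (le_max_right _ _)
    have h4 : um m + cm m ≤ ap m :=
      hapm ▸ le_trans (le_max_right _ _) (le_max_right _ _)
    constructor
    · rw [hH m hm, ← add_div, le_div_iff₀ hd]
      nlinarith [mul_nonneg (mul_nonneg hap0 hAm0) (by linarith : (0:ℝ) ≤ um m - am m),
        mul_nonneg (mul_nonneg (neg_nonneg.2 ham0) hAp0) (by linarith : (0:ℝ) ≤ up m - am m)]
    · rw [hH m hm, ← add_div, div_le_iff₀ hd]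
      nlinarith [mul_nonneg (mul_nonneg hap0 hAm0) (by linarith : (0:ℝ) ≤ ap m - um m),
        mul_nonneg (mul_nonneg (neg_nonneg.2 ham0) hAp0) (by linarith : (0:ℝ) ≤ ap m - up m)]
  have key1 : ∀ i ∈ I, 0 ≤ Δx i * Abar i + Δt * H i := by
    intro i hi
    have hb := (bounds i (Finset.mem_union_left _ hi)).1
    have := hin i hi
    nlinarith [mul_le_mul_of_nonneg_left hb hΔt]
  have key2 : ∀ j ∈ J, 0 ≤ Δx j * Abar j - Δt * H j := by
    intro j hj
    have hb := (bounds j (Finset.mem_union_right _ hj)).2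
    have := hout j hj
    nlinarith [mul_le_mul_of_nonneg_left hb hΔt]
  calc (0:ℝ) ≤ (∑ i ∈ I, (Δx i * Abar i + Δt * H i))
        + ∑ j ∈ J, (Δx j * Abar j - Δt * H j) :=
        add_nonneg (Finset.sum_nonneg key1) (Finset.sum_nonneg key2)
    _ = (∑ i ∈ I, Δx i * Abar i) + (∑ j ∈ J, Δx j * Abar j)
        + Δt * (∑ i ∈ I, H i) - Δt * (∑ j ∈ J, H j) := by
        rw [Finset.sum_add_distrib, Finset.sum_sub_distrib, Finset.mul_sum, Finset.mul_sum]
        ring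
end

section
/- Let I and J be finite index sets. For each channel end m ∈ I ∪ J suppose given Δx_m > 0, Ā_m ≥ 0, interface data A⁻_m, A⁺_m ≥ 0, u⁻_m, u⁺_m, c⁻_m, c⁺_m ≥ 0, one-sided local speeds a⁺_m = max{0, u⁺_m + c⁺_m, u⁻_m + c⁻_m}, a⁻_m = min{0, u⁺_m − c⁺_m, u⁻_m − c⁻_m} with a⁺_m − a⁻_m > 0, central-upwind mass flux H_m = (a⁺_m u⁻_m A⁻_m − a⁻_m u⁺_m A⁺_m)/(a⁺_m − a⁻_m) + a⁺_m a⁻_m (A⁺_m − A⁻_m)/(a⁺_m − a⁻_m), and an interface time step Δt_m ≥ 0. Assume the draining-time restrictions: Δt_i·(−a⁻_i)·A⁺_i·(a⁺_i − u⁺_i) ≤ Δx_i·Ā_i·(a⁺_i − a⁻_i) for every i ∈ I, and Δt_j·a⁺_j·A⁻_j·(u⁻_j − a⁻_j) ≤ Δx_j·Ā_j·(a⁺_j − a⁻_j) for every j ∈ J. Then ∑_{i∈I} Δx_i Ā_i + ∑_{j∈J} Δx_j Ā_j + ∑_{i∈I} Δt_i H_i − ∑_{j∈J} Δt_j H_j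 ≥ 0. -/
/-- Junction-node positivity under the draining-time restrictions: with per-interface time
steps `Δt_m ≥ 0` satisfying `Δt_i (-a⁻_i) A⁺_i (a⁺_i - u⁺_i) ≤ Δx_i Ā_i (a⁺_i - a⁻_i)` for
inflowing ends and `Δt_j a⁺_j A⁻_j (u⁻_j - a⁻_j) ≤ Δx_j Ā_j (a⁺_j - a⁻_j)` for outflowing
ends, the updated total water volume around the node is nonnegative. -/
theorem stmt4 {ι : Type*} [DecidableEq ι] (I J : Finset ι)
    (Δx Abar Am Ap um up cm cp ap am H Δt : ι → ℝ)
    (hΔx : ∀ m ∈ I ∪ J, 0 < Δx m) (hAbar : ∀ m ∈ I ∪ J, 0 ≤ Abar m)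
    (hAm : ∀ m ∈ I ∪ J, 0 ≤ Am m) (hAp : ∀ m ∈ I ∪ J, 0 ≤ Ap m)
    (hcm : ∀ m ∈ I ∪ J, 0 ≤ cm m) (hcp : ∀ m ∈ I ∪ J, 0 ≤ cp m)
    (hap : ∀ m ∈ I ∪ J, ap m = max 0 (max (up m + cp m) (um m + cm m)))
    (ham : ∀ m ∈ I ∪ J, am m = min 0 (min (up m - cp m) (um m - cm m)))
    (hpos : ∀ m ∈ I ∪ J, 0 < ap m - am m)
    (hH : ∀ m ∈ I ∪ J, H m = (ap m * um m * Am m - am m * up m * Ap m) / (ap m - am m)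
        + ap m * am m * (Ap m - Am m) / (ap m - am m))
    (hΔt : ∀ m ∈ I ∪ J, 0 ≤ Δt m)
    (hin : ∀ i ∈ I,
      Δt i * (-am i) * Ap i * (ap i - up i) ≤ Δx i * Abar i * (ap i - am i))
    (hout : ∀ j ∈ J,
      Δt j * ap j * Am j * (um j - am j) ≤ Δx j * Abar j * (ap j - am j)) :
    0 ≤ (∑ i ∈ I, Δx i * Abar i) + (∑ j ∈ J, Δx j * Abar j)
        + (∑ i ∈ I, Δt i * H i) - ∑ j ∈ J, Δt j * H j := by
  have key : ∀ m ∈ I ∪ J, H m * (ap m - am m)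
      = ap m * Am m * (um m - am m) - (-am m) * Ap m * (ap m - up m) := by
    intro m hm
    have hd := hpos m hm
    rw [hH m hm]
    field_simp
    ring
  have facts : ∀ m ∈ I ∪ J, 0 ≤ ap m ∧ am m ≤ 0 ∧ am m ≤ um m ∧ up m ≤ ap m := by
    intro m hm
    rw [hap m hm, ham m hm]
    refine ⟨le_max_left _ _, min_le_left _ _, ?_, ?_⟩
    · have := hcm m hm
      have : um m - cm m ≤ um m := by linarith
      exact le_trans (le_trans (min_le_right _ _) (min_le_right _ _)) this
    · have := hcp m hm
      have h1 : up m ≤ up m + cp m := by linarith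
      exact le_trans h1 (le_trans (le_max_left _ _) (le_max_right _ _))
  have hI : ∀ i ∈ I, 0 ≤ Δx i * Abar i + Δt i * H i := by
    intro i hi
    have hi' : i ∈ I ∪ J := Finset.mem_union_left _ hi
    have hd := hpos i hi'
    obtain ⟨h1, h2, h3, h4⟩ := facts i hi'
    have hk := key i hi'
    have hA := hAm i hi'
    have ht := hΔt i hi'
    have h5 := hin i hi
    have hprod : 0 ≤ (ap i - am i) * (Δx i * Abar i + Δt i * H i) := by
      have e : (ap i - am i) * (Δx i * Abar i + Δt i * H i)
          = Δx i * Abar i * (ap i - am i) + Δt i * (H i * (ap i - am i)) := by ring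
      rw [e, hk]
      nlinarith [mul_nonneg (mul_nonneg (mul_nonneg ht h1) hA) (by linarith : (0:ℝ) ≤ um i - am i)]
    exact nonneg_of_mul_nonneg_right hprod hd
  have hJ : ∀ j ∈ J, Δt j * H j ≤ Δx j * Abar j := by
    intro j hj
    have hj' : j ∈ I ∪ J := Finset.mem_union_right _ hj
    have hd := hpos j hj'
    obtain ⟨h1, h2, h3, h4⟩ := facts j hj'
    have hk := key j hj'
    have hA := hAp j hj'
    have ht := hΔt j hj'
    have h5 := hout j hj
    have hprod : 0 ≤ (ap j - am j) * (Δx j * Abar j - Δt j * H j) := by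
      have e : (ap j - am j) * (Δx j * Abar j - Δt j * H j)
          = Δx j * Abar j * (ap j - am j) - Δt j * (H j * (ap j - am j)) := by ring
      rw [e, hk]
      nlinarith [mul_nonneg (mul_nonneg (mul_nonneg ht (by linarith : (0:ℝ) ≤ -am j)) hA)
        (by linarith : (0:ℝ) ≤ ap j - up j)]
    have := nonneg_of_mul_nonneg_right hprod hd
    linarith
  have sI : 0 ≤ ∑ i ∈ I, (Δx i * Abar i + Δt i * H i) :=
    Finset.sum_nonneg hI
  have sJ : ∑ j ∈ J, Δt j * H j ≤ ∑ j ∈ J, Δx j * Abar j :=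
    Finset.sum_le_sum hJ
  rw [Finset.sum_add_distrib] at sI
  linarith
end

section
/- Let x₁ < x₂, let B : [x₁, x₂] → ℝ be continuously differentiable, let w ∈ ℝ be a constant with h(x) := w − B(x) ≥ 0 for all x ∈ [x₁, x₂], and let σ : [x₁, x₂] × [0, ∞) → ℝ be continuous with continuous partial derivative ∂σ/∂x. Define the hydrostatic pressure force I₁(x) = ∫₀^{h(x)} (h(x) − y)·σ(x, y) dy, the wall pressure force I₂(x) = ∫₀^{h(x)} (h(x) − y)·(∂σ/∂x)(x, y) dy, and the wetted area A(x) = ∫₀^{h(x)} σ(x, y) dy. Then I₁(x₂) − I₁(x₁) = ∫_{x₁}^{x₂} I₂(x) dx − ∫_{x₁}^{x₂} A(x)·B′(x) dx. -/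
open Set intervalIntegral

/-- Lake-at-rest source-flux balance: for a horizontal water surface `w` with depth
`h(x) = w - B(x) ≥ 0`, hydrostatic force `I₁(x) = ∫₀^{h(x)} (h(x)-y) σ(x,y) dy`, wall
pressure force `I₂(x) = ∫₀^{h(x)} (h(x)-y) ∂σ/∂x(x,y) dy` and wetted area
`A(x) = ∫₀^{h(x)} σ(x,y) dy`, one has
`I₁(x₂) - I₁(x₁) = ∫_{x₁}^{x₂} I₂ dx - ∫_{x₁}^{x₂} A B' dx`. -/
theorem stmt6 (x₁ x₂ : ℝ) (hx : x₁ < x₂) (w : ℝ)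
    (B B' : ℝ → ℝ)
    (hB : ∀ x ∈ Set.Icc x₁ x₂, HasDerivAt B (B' x) x)
    (hB' : ContinuousOn B' (Set.Icc x₁ x₂))
    (hh : ∀ x ∈ Set.Icc x₁ x₂, 0 ≤ w - B x)
    (σ σx : ℝ → ℝ → ℝ)
    (hσ : ContinuousOn (fun p : ℝ × ℝ => σ p.1 p.2) (Set.Icc x₁ x₂ ×ˢ Set.Ici 0))
    (hσx : ∀ y ∈ Set.Ici (0 : ℝ), ∀ x ∈ Set.Icc x₁ x₂,
      HasDerivAt (fun t => σ t y) (σx x y) x)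
    (hσxc : ContinuousOn (fun p : ℝ × ℝ => σx p.1 p.2) (Set.Icc x₁ x₂ ×ˢ Set.Ici 0))
    (I₁ I₂ A : ℝ → ℝ)
    (hI₁ : ∀ x, I₁ x = ∫ y in (0 : ℝ)..(w - B x), (w - B x - y) * σ x y)
    (hI₂ : ∀ x, I₂ x = ∫ y in (0 : ℝ)..(w - B x), (w - B x - y) * σx x y)
    (hA : ∀ x, A x = ∫ y in (0 : ℝ)..(w - B x), σ x y) :
    I₁ x₂ - I₁ x₁ = (∫ x in x₁..x₂, I₂ x) - ∫ x in x₁..x₂, A x * B' x := by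
  have hxle : x₁ ≤ x₂ := hx.le
  have hx12 : x₁ ∈ Icc x₁ x₂ := ⟨le_refl _, hxle⟩
  have hsconv : Convex ℝ (Icc x₁ x₂) := convex_Icc _ _
  have hBc : ContinuousOn B (Icc x₁ x₂) := fun x hx' =>
    (hB x hx').continuousAt.continuousWithinAt
  have hhc : ContinuousOn (fun x => w - B x) (Icc x₁ x₂) := continuousOn_const.sub hBc
  -- a uniform bound H on the depth
  obtain ⟨H, hHb⟩ := isCompact_Icc.exists_bound_of_continuousOn hhc
  have hhH : ∀ x ∈ Icc x₁ x₂, w - B x ≤ H := by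
    intro x hx'
    have := hHb x hx'
    rw [Real.norm_eq_abs] at this
    exact (le_abs_self _).trans this
  have hH0 : (0 : ℝ) ≤ H := le_trans (hh x₁ hx12) (hhH x₁ hx12)
  -- bounds on σ, σx, B'
  have hQcomp : IsCompact (Icc x₁ x₂ ×ˢ Icc (0:ℝ) H) := isCompact_Icc.prod isCompact_Icc
  have hQsub : (Icc x₁ x₂ ×ˢ Icc (0:ℝ) H) ⊆ Icc x₁ x₂ ×ˢ Ici (0:ℝ) :=
    Set.prod_mono_right Icc_subset_Ici_self
  obtain ⟨Mσ, hMσn⟩ := hQcomp.exists_bound_of_continuousOn (hσ.mono hQsub)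
  obtain ⟨Mσx, hMσxn⟩ := hQcomp.exists_bound_of_continuousOn (hσxc.mono hQsub)
  obtain ⟨MB, hMBn⟩ := isCompact_Icc.exists_bound_of_continuousOn hB'
  have hMσ : ∀ x ∈ Icc x₁ x₂, ∀ y ∈ Icc (0:ℝ) H, |σ x y| ≤ Mσ := by
    intro x hx' y hy'
    have := hMσn (x, y) ⟨hx', hy'⟩
    rwa [Real.norm_eq_abs] at this
  have hMσx : ∀ x ∈ Icc x₁ x₂, ∀ y ∈ Icc (0:ℝ) H, |σx x y| ≤ Mσx := by
    intro x hx' y hy'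
    have := hMσxn (x, y) ⟨hx', hy'⟩
    rwa [Real.norm_eq_abs] at this
  have hMσ0 : (0:ℝ) ≤ Mσ := (abs_nonneg _).trans (hMσ x₁ hx12 0 ⟨le_refl _, hH0⟩)
  have hMσx0 : (0:ℝ) ≤ Mσx := (abs_nonneg _).trans (hMσx x₁ hx12 0 ⟨le_refl _, hH0⟩)
  have hMB : ∀ x ∈ Icc x₁ x₂, |B' x| ≤ MB := by
    intro x hx'
    have := hMBn x hx'
    rwa [Real.norm_eq_abs] at this
  have hMB0 : (0:ℝ) ≤ MB := (abs_nonneg _).trans (hMB x₁ hx12)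
  -- Lipschitz estimates from the mean value theorem
  have hBlip : ∀ a ∈ Icc x₁ x₂, ∀ b ∈ Icc x₁ x₂, |B a - B b| ≤ MB * |a - b| := by
    intro a ha b hb
    have := hsconv.norm_image_sub_le_of_norm_hasDerivWithin_le
      (fun x hx' => (hB x hx').hasDerivWithinAt)
      (fun x hx' => by rw [Real.norm_eq_abs]; exact hMB x hx') hb ha
    simpa [Real.norm_eq_abs] using this
  have hσlip : ∀ y ∈ Icc (0:ℝ) H, ∀ a ∈ Icc x₁ x₂, ∀ b ∈ Icc x₁ x₂,
      |σ a y - σ b y| ≤ Mσx * |a - b| := by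
    intro y hy a ha b hb
    have := hsconv.norm_image_sub_le_of_norm_hasDerivWithin_le
      (f := fun t => σ t y) (f' := fun t => σx t y)
      (fun x hx' => (hσx y hy.1 x hx').hasDerivWithinAt)
      (fun x hx' => by rw [Real.norm_eq_abs]; exact hMσx x hx' y hy) hb ha
    simpa [Real.norm_eq_abs] using this
  -- slice continuity
  have hslicey : ∀ τ : ℝ → ℝ → ℝ,
      ContinuousOn (fun p : ℝ × ℝ => τ p.1 p.2) (Icc x₁ x₂ ×ˢ Ici 0) →
      ∀ x ∈ Icc x₁ x₂, ContinuousOn (fun y => τ x y) (Ici 0) := by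
    intro τ hτ x hx'
    exact hτ.comp ((continuous_const.prodMk continuous_id).continuousOn)
      (fun y hy => ⟨hx', hy⟩)
  have hslicex : ∀ τ : ℝ → ℝ → ℝ,
      ContinuousOn (fun p : ℝ × ℝ => τ p.1 p.2) (Icc x₁ x₂ ×ˢ Ici 0) →
      ∀ y ∈ Ici (0:ℝ), ContinuousOn (fun x => τ x y) (Icc x₁ x₂) := by
    intro τ hτ y hy
    exact hτ.comp ((continuous_id.prodMk continuous_const).continuousOn)
      (fun x hx' => ⟨hx', hy⟩)
  -- representation with a fixed upper limit H
  have key : ∀ τ : ℝ → ℝ → ℝ,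
      ContinuousOn (fun p : ℝ × ℝ => τ p.1 p.2) (Icc x₁ x₂ ×ˢ Ici 0) →
      ∀ x ∈ Icc x₁ x₂,
      (∫ y in (0:ℝ)..(w - B x), (w - B x - y) * τ x y)
        = ∫ y in (0:ℝ)..H, max (w - B x - y) 0 * τ x y := by
    intro τ hτ x hx'
    have h0x : (0:ℝ) ≤ w - B x := hh x hx'
    have hxH : w - B x ≤ H := hhH x hx'
    have hcy : ContinuousOn (fun y => max (w - B x - y) 0 * τ x y) (Ici 0) :=
      ((continuousOn_const.sub continuousOn_id).sup continuousOn_const).mul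
        (hslicey τ hτ x hx')
    have int1 : IntervalIntegrable (fun y => max (w - B x - y) 0 * τ x y)
        MeasureTheory.volume 0 (w - B x) := by
      apply (hcy.mono ?_).intervalIntegrable
      rw [uIcc_of_le h0x]; exact Icc_subset_Ici_self
    have int2 : IntervalIntegrable (fun y => max (w - B x - y) 0 * τ x y)
        MeasureTheory.volume (w - B x) H := by
      apply (hcy.mono ?_).intervalIntegrable
      rw [uIcc_of_le hxH]
      exact Icc_subset_Ici_self.trans (Ici_subset_Ici.mpr h0x)
    have hsplit := intervalIntegral.integral_add_adjacent_intervals int1 int2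
    have e1 : (∫ y in (0:ℝ)..(w - B x), (w - B x - y) * τ x y)
        = ∫ y in (0:ℝ)..(w - B x), max (w - B x - y) 0 * τ x y := by
      apply intervalIntegral.integral_congr
      intro y hy
      rw [uIcc_of_le h0x] at hy
      simp only [max_eq_left (by linarith [hy.2] : (0:ℝ) ≤ w - B x - y)]
    have e2 : (∫ y in (w - B x)..H, max (w - B x - y) 0 * τ x y) = 0 := by
      rw [intervalIntegral.integral_congr (g := fun _ => (0:ℝ)) ?_,
        intervalIntegral.integral_zero]
      intro y hy
      rw [uIcc_of_le hxH] at hy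
      simp only [max_eq_right (by linarith [hy.1] : w - B x - y ≤ 0), zero_mul]
    rw [e1, ← hsplit, e2, add_zero]
  -- continuity of the fixed-limit parametric integral
  have contG : ∀ τ : ℝ → ℝ → ℝ,
      ContinuousOn (fun p : ℝ × ℝ => τ p.1 p.2) (Icc x₁ x₂ ×ˢ Ici 0) →
      ∀ M : ℝ, (∀ x ∈ Icc x₁ x₂, ∀ y ∈ Icc (0:ℝ) H, |τ x y| ≤ M) →
      ContinuousOn (fun x => ∫ y in (0:ℝ)..H, max (w - B x - y) 0 * τ x y)
        (Icc x₁ x₂) := by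
    intro τ hτ M hM x₀ hx₀
    have hM0 : (0:ℝ) ≤ M := (abs_nonneg _).trans (hM x₁ hx12 0 ⟨le_refl _, hH0⟩)
    apply intervalIntegral.continuousWithinAt_of_dominated_interval
      (bound := fun _ => H * M)
    · filter_upwards [self_mem_nhdsWithin] with x hx'
      apply ContinuousOn.aestronglyMeasurable ?_ measurableSet_uIoc
      apply (((continuousOn_const.sub continuousOn_id).sup continuousOn_const).mul
        (hslicey τ hτ x hx')).mono
      rw [uIoc_of_le hH0]
      exact Ioc_subset_Icc_self.trans Icc_subset_Ici_self
    · filter_upwards [self_mem_nhdsWithin] with x hx'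
      filter_upwards with y hy
      rw [uIoc_of_le hH0] at hy
      rw [Real.norm_eq_abs, abs_mul]
      have h1 : |max (w - B x - y) 0| ≤ H := by
        rw [abs_of_nonneg (le_max_right _ _)]
        exact max_le (by linarith [hhH x hx', hy.1]) hH0
      have h2 : |τ x y| ≤ M := hM x hx' y ⟨hy.1.le, hy.2⟩
      exact mul_le_mul h1 h2 (abs_nonneg _) hH0
    · exact intervalIntegrable_const
    · filter_upwards with y hy
      rw [uIoc_of_le hH0] at hy
      exact ((((continuousOn_const.sub hBc).sub continuousOn_const).sup
        continuousOn_const).mul (hslicex τ hτ y hy.1.le)) x₀ hx₀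
  -- continuity of I₁, I₂ on [x₁, x₂]
  have hI₁c : ContinuousOn I₁ (Icc x₁ x₂) :=
    (contG σ hσ Mσ hMσ).congr (fun x hx' => (hI₁ x).trans (key σ hσ x hx'))
  have hI₂c : ContinuousOn I₂ (Icc x₁ x₂) :=
    (contG σx hσxc Mσx hMσx).congr (fun x hx' => (hI₂ x).trans (key σx hσxc x hx'))
  -- continuity of A on [x₁, x₂]
  have Akey : ∀ x ∈ Icc x₁ x₂,
      A x = ∫ y in (0:ℝ)..H, (Iic (w - B x)).indicator (fun y => σ x y) y := by
    intro x hx'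
    have h0x : (0:ℝ) ≤ w - B x := hh x hx'
    have hxH : w - B x ≤ H := hhH x hx'
    have hcy : ContinuousOn (fun y => σ x y) (Ici 0) := hslicey σ hσ x hx'
    have int1 : IntervalIntegrable ((Iic (w - B x)).indicator (fun y => σ x y))
        MeasureTheory.volume 0 (w - B x) := by
      rw [intervalIntegrable_iff, uIoc_of_le h0x]
      have base : MeasureTheory.IntegrableOn (fun y => σ x y) (Ioc 0 (w - B x)) :=
        ((hcy.mono Icc_subset_Ici_self).integrableOn_Icc).mono_set Ioc_subset_Icc_self
      exact base.congr_fun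
        (fun y hy => (Set.indicator_of_mem (mem_Iic.mpr hy.2) _).symm) measurableSet_Ioc
    have int2 : IntervalIntegrable ((Iic (w - B x)).indicator (fun y => σ x y))
        MeasureTheory.volume (w - B x) H := by
      rw [intervalIntegrable_iff, uIoc_of_le hxH]
      have base : MeasureTheory.IntegrableOn (fun _ : ℝ => (0:ℝ)) (Ioc (w - B x) H)
          MeasureTheory.volume := MeasureTheory.integrableOn_zero
      exact base.congr_fun
        (fun y hy => (Set.indicator_of_notMem
          (by simp only [mem_Iic, not_le]; exact hy.1) _).symm) measurableSet_Ioc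
    have hsplit := intervalIntegral.integral_add_adjacent_intervals int1 int2
    have e1 : (∫ y in (0:ℝ)..(w - B x), (Iic (w - B x)).indicator (fun y => σ x y) y)
        = ∫ y in (0:ℝ)..(w - B x), σ x y := by
      apply intervalIntegral.integral_congr
      intro y hy
      rw [uIcc_of_le h0x] at hy
      exact Set.indicator_of_mem (mem_Iic.mpr hy.2) _
    have e2 : (∫ y in (w - B x)..H, (Iic (w - B x)).indicator (fun y => σ x y) y) = 0 := by
      rw [intervalIntegral.integral_congr_ae (g := fun _ => (0:ℝ)) ?_,
        intervalIntegral.integral_zero]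
      apply MeasureTheory.ae_of_all
      intro y hy
      rw [uIoc_of_le hxH] at hy
      exact Set.indicator_of_notMem (by simp [mem_Iic, not_le, hy.1]) _
    rw [hA x, ← e1, ← hsplit, e2, add_zero]
  have hAc : ContinuousOn A (Icc x₁ x₂) := by
    have main : ContinuousOn
        (fun x => ∫ y in (0:ℝ)..H, (Iic (w - B x)).indicator (fun y => σ x y) y)
        (Icc x₁ x₂) := by
      intro x₀ hx₀
      apply intervalIntegral.continuousWithinAt_of_dominated_interval
        (bound := fun _ => Mσ)
      · filter_upwards [self_mem_nhdsWithin] with x hx'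
        apply MeasureTheory.AEStronglyMeasurable.indicator ?_ measurableSet_Iic
        apply ContinuousOn.aestronglyMeasurable ?_ measurableSet_uIoc
        apply (hslicey σ hσ x hx').mono
        rw [uIoc_of_le hH0]
        exact Ioc_subset_Icc_self.trans Icc_subset_Ici_self
      · filter_upwards [self_mem_nhdsWithin] with x hx'
        filter_upwards with y hy
        rw [uIoc_of_le hH0] at hy
        rw [Real.norm_eq_abs, Set.indicator_apply]
        split_ifs
        · exact hMσ x hx' y ⟨hy.1.le, hy.2⟩
        · simpa using hMσ x hx' y ⟨hy.1.le, hy.2⟩ |>.trans (le_refl _) |>.trans (le_refl _) |> fun _ => (abs_nonneg (σ x y)).trans (hMσ x hx' y ⟨hy.1.le, hy.2⟩)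
      · exact intervalIntegrable_const
      · have hne : ∀ᵐ (y : ℝ), y ≠ w - B x₀ := by
          refine MeasureTheory.ae_iff.mpr ?_
          simp only [not_not, Set.setOf_eq_eq_singleton]
          exact MeasureTheory.measure_singleton _
        filter_upwards [hne] with y hyne hy
        rw [uIoc_of_le hH0] at hy
        rcases lt_or_gt_of_ne hyne with hlt | hgt
        · have hev : ∀ᶠ x in nhdsWithin x₀ (Icc x₁ x₂), y < w - B x :=
            (hhc x₀ hx₀) (Ioi_mem_nhds hlt)
          apply ContinuousWithinAt.congr_of_eventuallyEq
            ((hslicex σ hσ y hy.1.le) x₀ hx₀)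
          · filter_upwards [hev] with x hx'
            exact Set.indicator_of_mem (mem_Iic.mpr hx'.le) _
          · exact Set.indicator_of_mem (mem_Iic.mpr hlt.le) _
        · have hev : ∀ᶠ x in nhdsWithin x₀ (Icc x₁ x₂), w - B x < y :=
            (hhc x₀ hx₀) (Iio_mem_nhds hgt)
          apply ContinuousWithinAt.congr_of_eventuallyEq continuousWithinAt_const
          · filter_upwards [hev] with x hx'
            exact Set.indicator_of_notMem (by simp [mem_Iic, not_le, hx']) _
          · exact Set.indicator_of_notMem (by simp [mem_Iic, not_le, hgt]) _
    exact main.congr Akey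
  -- the derivative of I₁ on the open interval
  have hderiv : ∀ x₀ ∈ Ioo x₁ x₂, HasDerivAt I₁ (I₂ x₀ - A x₀ * B' x₀) x₀ := by
    intro x₀ hx₀
    have hx₀' : x₀ ∈ Icc x₁ x₂ := Ioo_subset_Icc_self hx₀
    obtain ⟨ε, hε, hball⟩ : ∃ ε > 0, Metric.ball x₀ ε ⊆ Ioo x₁ x₂ :=
      Metric.isOpen_iff.mp isOpen_Ioo x₀ hx₀
    have hc0 : (0:ℝ) ≤ w - B x₀ := hh x₀ hx₀'
    have hcH : w - B x₀ ≤ H := hhH x₀ hx₀'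
    set φ : ℝ → ℝ := fun y => (w - B x₀ - y) * σx x₀ y - B' x₀ * σ x₀ y with hφdef
    have hφc : ContinuousOn φ (Ici 0) :=
      (((continuousOn_const.sub continuousOn_id)).mul (hslicey σx hσxc x₀ hx₀')).sub
        (continuousOn_const.mul (hslicey σ hσ x₀ hx₀'))
    have hne : ∀ᵐ (y : ℝ), y ≠ w - B x₀ := by
      refine MeasureTheory.ae_iff.mpr ?_
      simp only [not_not, Set.setOf_eq_eq_singleton]
      exact MeasureTheory.measure_singleton _
    have main := intervalIntegral.hasDerivAt_integral_of_dominated_loc_of_lip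
      (F := fun x y => max (w - B x - y) 0 * σ x y)
      (F' := fun y => (Iio (w - B x₀)).indicator φ y) (x₀ := x₀)
      (a := 0) (b := H) (bound := fun _ => MB * Mσ + H * Mσx)
      (μ := MeasureTheory.volume) (Metric.ball_mem_nhds x₀ hε)
      ?_ ?_ ?_ ?_ ?_ ?_
    · -- identify the derivative and transfer to I₁
      have hIG : I₁ =ᶠ[nhds x₀]
          fun x => ∫ y in (0:ℝ)..H, max (w - B x - y) 0 * σ x y := by
        filter_upwards [isOpen_Ioo.mem_nhds hx₀] with x hx'
        exact (hI₁ x).trans (key σ hσ x (Ioo_subset_Icc_self hx'))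
      have hval : (∫ y in (0:ℝ)..H, (Iio (w - B x₀)).indicator φ y)
          = I₂ x₀ - A x₀ * B' x₀ := by
        have hmeq : Ioc (0:ℝ) H ∩ Iio (w - B x₀) = Ioo 0 (w - B x₀) := by
          ext y
          simp only [mem_inter_iff, mem_Ioc, mem_Iio, mem_Ioo]
          exact ⟨fun h => ⟨h.1.1, h.2⟩, fun h => ⟨⟨h.1, h.2.le.trans hcH⟩, h.2⟩⟩
        have e0 : (∫ y in (0:ℝ)..H, (Iio (w - B x₀)).indicator φ y)
            = ∫ y in (0:ℝ)..(w - B x₀), φ y := by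
          rw [intervalIntegral.integral_of_le hH0,
            MeasureTheory.setIntegral_indicator measurableSet_Iio, hmeq,
            ← MeasureTheory.integral_Ioc_eq_integral_Ioo,
            ← intervalIntegral.integral_of_le hc0]
        have i1 : IntervalIntegrable (fun y => (w - B x₀ - y) * σx x₀ y)
            MeasureTheory.volume 0 (w - B x₀) := by
          apply ContinuousOn.intervalIntegrable
          apply (((continuousOn_const.sub continuousOn_id)).mul
            (hslicey σx hσxc x₀ hx₀')).mono
          rw [uIcc_of_le hc0]; exact Icc_subset_Ici_self
        have i2 : IntervalIntegrable (fun y => B' x₀ * σ x₀ y)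
            MeasureTheory.volume 0 (w - B x₀) := by
          apply ContinuousOn.intervalIntegrable
          apply (continuousOn_const.mul (hslicey σ hσ x₀ hx₀')).mono
          rw [uIcc_of_le hc0]; exact Icc_subset_Ici_self
        rw [e0, hφdef]
        rw [intervalIntegral.integral_sub i1 i2, intervalIntegral.integral_const_mul,
          hI₂ x₀, hA x₀]
        ring
      rw [← hval]
      exact main.2.congr_of_eventuallyEq hIG
    · -- measurability of F x near x₀
      filter_upwards [isOpen_Ioo.mem_nhds hx₀] with x hx'
      have hx'' : x ∈ Icc x₁ x₂ := Ioo_subset_Icc_self hx'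
      apply ContinuousOn.aestronglyMeasurable ?_ measurableSet_uIoc
      apply (((continuousOn_const.sub continuousOn_id).sup continuousOn_const).mul
        (hslicey σ hσ x hx'')).mono
      rw [uIoc_of_le hH0]
      exact Ioc_subset_Icc_self.trans Icc_subset_Ici_self
    · -- integrability of F x₀
      apply ContinuousOn.intervalIntegrable
      apply (((continuousOn_const.sub continuousOn_id).sup continuousOn_const).mul
        (hslicey σ hσ x₀ hx₀')).mono
      rw [uIcc_of_le hH0]
      exact Icc_subset_Ici_self
    · -- measurability of F'
      apply MeasureTheory.AEStronglyMeasurable.indicator ?_ measurableSet_Iio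
      apply ContinuousOn.aestronglyMeasurable ?_ measurableSet_uIoc
      apply hφc.mono
      rw [uIoc_of_le hH0]
      exact Ioc_subset_Icc_self.trans Icc_subset_Ici_self
    · -- Lipschitz estimate
      refine MeasureTheory.ae_of_all _ (fun y hy => ?_)
      rw [uIoc_of_le hH0] at hy
      have hy' : y ∈ Icc (0:ℝ) H := ⟨hy.1.le, hy.2⟩
      apply LipschitzOnWith.of_dist_le_mul
      intro a ha b hb
      have ha' : a ∈ Icc x₁ x₂ := Ioo_subset_Icc_self (hball ha)
      have hb' : b ∈ Icc x₁ x₂ := Ioo_subset_Icc_self (hball hb)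
      rw [Real.dist_eq, Real.dist_eq]
      have e : max (w - B a - y) 0 * σ a y - max (w - B b - y) 0 * σ b y
          = (max (w - B a - y) 0 - max (w - B b - y) 0) * σ a y
            + max (w - B b - y) 0 * (σ a y - σ b y) := by ring
      rw [e]
      have h1 : |max (w - B a - y) 0 - max (w - B b - y) 0| ≤ MB * |a - b| := by
        refine (abs_max_sub_max_le_abs _ _ _).trans ?_
        have e2 : (w - B a - y) - (w - B b - y) = B b - B a := by ring
        rw [e2, abs_sub_comm a b]
        exact hBlip b hb' a ha'
      have h2 : |σ a y| ≤ Mσ := hMσ a ha' y hy'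
      have h3 : max (w - B b - y) 0 ≤ H := max_le (by linarith [hhH b hb', hy.1]) hH0
      have h4 : |σ a y - σ b y| ≤ Mσx * |a - b| := hσlip y hy' a ha' b hb'
      have hnn : (0:ℝ) ≤ max (w - B b - y) 0 := le_max_right _ _
      calc |(max (w - B a - y) 0 - max (w - B b - y) 0) * σ a y
            + max (w - B b - y) 0 * (σ a y - σ b y)|
          ≤ |(max (w - B a - y) 0 - max (w - B b - y) 0) * σ a y|
            + |max (w - B b - y) 0 * (σ a y - σ b y)| := abs_add_le _ _
        _ = |max (w - B a - y) 0 - max (w - B b - y) 0| * |σ a y|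
            + max (w - B b - y) 0 * |σ a y - σ b y| := by
              rw [abs_mul, abs_mul, abs_of_nonneg hnn]
        _ ≤ (MB * |a - b|) * Mσ + H * (Mσx * |a - b|) := by
              apply add_le_add
              · exact mul_le_mul h1 h2 (abs_nonneg _) (by positivity)
              · exact mul_le_mul h3 h4 (abs_nonneg _) hH0
        _ = (MB * Mσ + H * Mσx) * |a - b| := by ring
        _ ≤ ↑(Real.nnabs (MB * Mσ + H * Mσx)) * |a - b| := by
              rw [Real.coe_nnabs]
              exact mul_le_mul_of_nonneg_right (le_abs_self _) (abs_nonneg _)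
        _ = ↑(Real.nnabs (MB * Mσ + H * Mσx)) * dist a b := by rw [Real.dist_eq]
    · exact intervalIntegrable_const
    · -- pointwise differentiability in x for a.e. y
      filter_upwards [hne] with y hyne hy
      rw [uIoc_of_le hH0] at hy
      have hy0 : (0:ℝ) ≤ y := hy.1.le
      rcases lt_or_gt_of_ne hyne with hlt | hgt
      · have h0 : (0:ℝ) < w - B x₀ - y := by linarith
        have hct : ContinuousAt (fun x => w - B x - y) x₀ :=
          (continuousAt_const.sub (hB x₀ hx₀').continuousAt).sub continuousAt_const
        have hev : ∀ᶠ x in nhds x₀, 0 < w - B x - y := hct (Ioi_mem_nhds h0)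
        have hd : HasDerivAt (fun x => (w - B x - y) * σ x y)
            (-(B' x₀) * σ x₀ y + (w - B x₀ - y) * σx x₀ y) x₀ :=
          (((hB x₀ hx₀').const_sub w).sub_const y).mul (hσx y hy0 x₀ hx₀')
        have hFy : (Iio (w - B x₀)).indicator φ y
            = -(B' x₀) * σ x₀ y + (w - B x₀ - y) * σx x₀ y := by
          rw [Set.indicator_of_mem (mem_Iio.mpr hlt), hφdef]
          ring
        rw [hFy]
        apply hd.congr_of_eventuallyEq
        filter_upwards [hev] with x hx'
        rw [max_eq_left hx'.le]
      · have h0 : w - B x₀ - y < 0 := by linarith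
        have hct : ContinuousAt (fun x => w - B x - y) x₀ :=
          (continuousAt_const.sub (hB x₀ hx₀').continuousAt).sub continuousAt_const
        have hev : ∀ᶠ x in nhds x₀, w - B x - y < 0 := hct (Iio_mem_nhds h0)
        have hFy : (Iio (w - B x₀)).indicator φ y = 0 :=
          Set.indicator_of_notMem (by simp [mem_Iio, not_lt, hgt.le]) _
        rw [hFy]
        apply (hasDerivAt_const x₀ (0:ℝ)).congr_of_eventuallyEq
        filter_upwards [hev] with x hx'
        rw [max_eq_right hx'.le, zero_mul]
  -- integrability of the pieces
  have hI₂int : IntervalIntegrable I₂ MeasureTheory.volume x₁ x₂ := by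
    apply ContinuousOn.intervalIntegrable
    rwa [uIcc_of_le hxle]
  have hABint : IntervalIntegrable (fun x => A x * B' x) MeasureTheory.volume x₁ x₂ := by
    apply ContinuousOn.intervalIntegrable
    rw [uIcc_of_le hxle]
    exact hAc.mul hB'
  -- fundamental theorem of calculus
  have hftc := intervalIntegral.integral_eq_sub_of_hasDeriv_right_of_le hxle hI₁c
    (fun x hx' => (hderiv x hx').hasDerivWithinAt) (hI₂int.sub hABint)
  rw [intervalIntegral.integral_sub hI₂int hABint] at hftc
  exact hftc.symm
end

section
/- Let x₁ < x₂, let g > 0, let B, h : [x₁, x₂] → ℝ be continuously differentiable with h(x) > 0 on [x₁, x₂], let σ : [x₁, x₂] × [0, ∞) → ℝ be continuous with continuous partial derivative ∂σ/∂x, and suppose the wetted area A(x) = ∫₀^{h(x)} σ(x, y) dy is positive on [x₁, x₂]. Let Q ∈ ℝ be a constant, and define I₁(x) = ∫₀^{h(x)} (h(x) − y)·σ(x, y) dy and I₂(x) = ∫₀^{h(x)} (h(x) − y)·(∂σ/∂x)(x, y) dy. If the steady frictionless momentum equation d/dx (Q²/A(x) + g·I₁(x)) = g·I₂(x) − g·A(x)·B′(x)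 holds on (x₁, x₂), then the energy E(x) = Q²/(2·A(x)²) + g·(h(x) + B(x)) is constant on [x₁, x₂]. -/
open Set intervalIntegral MeasureTheory Filter Topology
open scoped Interval

/-- Section continuity. -/
lemma my_sectionCont {x₁ x₂ : ℝ} (f : ℝ → ℝ → ℝ)
    (hf : ContinuousOn (fun p : ℝ × ℝ => f p.1 p.2) (Icc x₁ x₂ ×ˢ Ici 0))
    {x : ℝ} (hx : x ∈ Icc x₁ x₂) : ContinuousOn (f x) (Ici 0) := by
  have : f x = (fun p : ℝ × ℝ => f p.1 p.2) ∘ fun y => (x, y) := rfl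
  rw [this]
  exact hf.comp ((continuous_const.prodMk continuous_id).continuousOn)
    (fun y hy => ⟨hx, hy⟩)

lemma my_abs_le_of_mem_uIoc {a b y : ℝ} (hy : y ∈ Ι a b) : |y - a| ≤ |b - a| := by
  rw [Set.mem_uIoc] at hy
  rw [abs_sub_le_iff, abs_sub_comm]
  rcases hy with ⟨h1, h2⟩ | ⟨h1, h2⟩ <;>
    constructor <;> [skip; skip; skip; skip] <;>
    calc _ ≤ |a - b| := by rcases abs_cases (a - b) with ⟨h, _⟩ | ⟨h, _⟩ <;> linarith
      _ = _ := rfl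

/-- Leibniz rule with moving upper endpoint, on an interval. -/
lemma my_param_hasDerivAt (x₁ x₂ : ℝ) (h h' : ℝ → ℝ)
    (hhd : ∀ x ∈ Icc x₁ x₂, HasDerivAt h (h' x) x)
    (hhpos : ∀ x ∈ Icc x₁ x₂, 0 < h x)
    (f fx : ℝ → ℝ → ℝ)
    (hf : ContinuousOn (fun p : ℝ × ℝ => f p.1 p.2) (Icc x₁ x₂ ×ˢ Ici 0))
    (hfd : ∀ y ∈ Ici (0:ℝ), ∀ x ∈ Icc x₁ x₂, HasDerivAt (fun t => f t y) (fx x y) x)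
    (hfx : ContinuousOn (fun p : ℝ × ℝ => fx p.1 p.2) (Icc x₁ x₂ ×ˢ Ici 0))
    (x₀ : ℝ) (hx₀ : x₀ ∈ Ioo x₁ x₂) :
    HasDerivAt (fun x => ∫ y in (0:ℝ)..h x, f x y)
      (f x₀ (h x₀) * h' x₀ + ∫ y in (0:ℝ)..h x₀, fx x₀ y) x₀ := by
  have hx₀' : x₀ ∈ Icc x₁ x₂ := Ioo_subset_Icc_self hx₀
  set c := h x₀ with hc_def
  have hc : 0 < c := hhpos x₀ hx₀'
  have hIcc_nhds : Icc x₁ x₂ ∈ 𝓝 x₀ := Icc_mem_nhds hx₀.1 hx₀.2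
  obtain ⟨ε, hε, hball⟩ : ∃ ε > 0, Metric.ball x₀ ε ⊆ Icc x₁ x₂ :=
    Metric.mem_nhds_iff.mp hIcc_nhds
  -- bound for fx on compact set
  obtain ⟨C, hC⟩ : ∃ C, ∀ p ∈ Icc x₁ x₂ ×ˢ Icc (0:ℝ) c,
      ‖fx p.1 p.2‖ ≤ C :=
    (isCompact_Icc.prod isCompact_Icc).exists_bound_of_continuousOn
      (hfx.mono (prod_mono_right (Icc_subset_Ici_self)))
  -- Part 1: fixed endpoint parametric integral
  have hG : HasDerivAt (fun x => ∫ y in (0:ℝ)..c, f x y)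
      (∫ y in (0:ℝ)..c, fx x₀ y) x₀ := by
    refine (intervalIntegral.hasDerivAt_integral_of_dominated_loc_of_deriv_le (Metric.ball_mem_nhds x₀ hε)
      ?_ ?_ ?_ (bound := fun _ => C) ?_ ?_ ?_).2
    · filter_upwards [hIcc_nhds] with x hx
      exact ((my_sectionCont f hf hx).mono (uIoc_of_le hc.le ▸ Ioc_subset_Icc_self.trans
        (Icc_subset_Ici_self))).aestronglyMeasurable measurableSet_uIoc
    · exact ((my_sectionCont f hf hx₀').mono
        ((uIcc_of_le hc.le) ▸ Icc_subset_Ici_self)).intervalIntegrable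
    · exact ((my_sectionCont fx hfx hx₀').mono (uIoc_of_le hc.le ▸ Ioc_subset_Icc_self.trans
        (Icc_subset_Ici_self))).aestronglyMeasurable measurableSet_uIoc
    · refine Filter.Eventually.of_forall fun t ht x hx => ?_
      rw [uIoc_of_le hc.le] at ht
      exact hC (x, t) ⟨hball hx, Ioc_subset_Icc_self ht⟩
    · exact intervalIntegrable_const
    · refine Filter.Eventually.of_forall fun t ht x hx => ?_
      rw [uIoc_of_le hc.le] at ht
      exact hfd t (le_of_lt ht.1) x (hball hx)
  -- Part 2: moving endpoint term
  have hψ : HasDerivAt (fun x => ∫ y in c..h x, f x y) (f x₀ c * h' x₀) x₀ := by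
    rw [hasDerivAt_iff_isLittleO]
    have hh0 := hasDerivAt_iff_isLittleO.mp (hhd x₀ hx₀')
    have hdecomp : (fun x => (∫ y in c..h x, f x y) - (∫ y in c..h x₀, f x₀ y)
        - (x - x₀) • (f x₀ c * h' x₀)) =
        (fun x => (∫ y in c..h x, f x y) - f x₀ c * (h x - c))
        + (fun x => f x₀ c * (h x - h x₀ - (x - x₀) • h' x₀)) := by
      funext x
      simp only [← hc_def, intervalIntegral.integral_same, smul_eq_mul, Pi.add_apply]
      ring
    rw [hdecomp]
    refine Asymptotics.IsLittleO.add ?_ (hh0.const_mul_left (f x₀ c))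
    -- first piece
    rw [Asymptotics.isLittleO_iff]
    intro C' hC'
    set L : ℝ := |h' x₀| + 1 with hL_def
    have hL : 0 < L := by positivity
    have ev1 : ∀ᶠ x in 𝓝 x₀, |h x - c| ≤ L * |x - x₀| := by
      filter_upwards [Asymptotics.isLittleO_iff.mp hh0 one_pos] with x hx
      have : |h x - c - (x - x₀) * h' x₀| ≤ 1 * |x - x₀| := by
        simpa [Real.norm_eq_abs, smul_eq_mul] using hx
      calc |h x - c| ≤ |h x - c - (x - x₀) * h' x₀| + |(x - x₀) * h' x₀| := by
            simpa using abs_add_le (h x - c - (x - x₀) * h' x₀) ((x - x₀) * h' x₀)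
          _ ≤ 1 * |x - x₀| + |x - x₀| * |h' x₀| := by rw [abs_mul]; linarith
          _ = L * |x - x₀| := by rw [hL_def]; ring
    set ε' : ℝ := C' / L with hε'_def
    have hε' : 0 < ε' := div_pos hC' hL
    have hcontf : ContinuousAt (fun p : ℝ × ℝ => f p.1 p.2) (x₀, c) :=
      hf.continuousAt (prod_mem_nhds hIcc_nhds (Ici_mem_nhds hc))
    obtain ⟨δ, hδ, hδf⟩ := Metric.continuousAt_iff.mp hcontf ε' hε'
    have hTh : Filter.Tendsto h (𝓝 x₀) (𝓝 c) := (hhd x₀ hx₀').continuousAt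
    have ev2 : ∀ᶠ x in 𝓝 x₀, |h x - c| < δ := by
      have := hTh (Metric.ball_mem_nhds c hδ)
      filter_upwards [this] with x hx
      simpa [Real.dist_eq] using hx
    have ev4 : ∀ᶠ x in 𝓝 x₀, |x - x₀| < δ := by
      have : Metric.ball x₀ δ ∈ 𝓝 x₀ := Metric.ball_mem_nhds x₀ hδ
      filter_upwards [this] with x hx
      simpa [Real.dist_eq] using hx
    filter_upwards [ev1, ev2, hIcc_nhds, ev4] with x e1 e2 e3 e4
    have hx_pos : 0 < h x := hhpos x e3
    have hsub : uIcc c (h x) ⊆ Ici (0:ℝ) := by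
      rw [uIcc]
      intro y hy
      exact le_trans (le_min hc.le hx_pos.le) hy.1
    have hint : IntervalIntegrable (f x) volume c (h x) :=
      ((my_sectionCont f hf e3).mono hsub).intervalIntegrable
    have key : (∫ y in c..h x, f x y) - f x₀ c * (h x - c)
        = ∫ y in c..h x, (f x y - f x₀ c) := by
      rw [intervalIntegral.integral_sub hint intervalIntegrable_const,
        intervalIntegral.integral_const, smul_eq_mul]
      ring
    rw [Real.norm_eq_abs, key]
    have hb : ∀ y ∈ Ι c (h x), ‖f x y - f x₀ c‖ ≤ ε' := by
      intro y hy
      have h1 : |y - c| ≤ |h x - c| := my_abs_le_of_mem_uIoc hy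
      have hd : dist (x, y) ((x₀ : ℝ), c) < δ := by
        rw [Prod.dist_eq]
        simp only [Real.dist_eq]
        exact max_lt e4 (lt_of_le_of_lt h1 e2)
      have := hδf hd
      rw [Real.dist_eq] at this
      exact le_of_lt this
    calc |∫ y in c..h x, (f x y - f x₀ c)| ≤ ε' * |h x - c| :=
          intervalIntegral.norm_integral_le_of_norm_le_const hb
      _ ≤ ε' * (L * |x - x₀|) := by
          exact mul_le_mul_of_nonneg_left e1 hε'.le
      _ = C' * ‖x - x₀‖ := by
          rw [Real.norm_eq_abs, hε'_def, ← mul_assoc, div_mul_cancel₀ _ hL.ne']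
  -- combine
  have heq : (fun x => ∫ y in (0:ℝ)..h x, f x y) =ᶠ[𝓝 x₀]
      (fun x => (∫ y in (0:ℝ)..c, f x y) + ∫ y in c..h x, f x y) := by
    filter_upwards [hIcc_nhds] with x hx
    have h1 : IntervalIntegrable (f x) volume 0 c :=
      ((my_sectionCont f hf hx).mono ((uIcc_of_le hc.le) ▸ Icc_subset_Ici_self)).intervalIntegrable
    have h2 : IntervalIntegrable (f x) volume c (h x) := by
      refine ((my_sectionCont f hf hx).mono ?_).intervalIntegrable
      rw [uIcc]
      intro y hy
      exact le_trans (le_min hc.le (hhpos x hx).le) hy.1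
    rw [intervalIntegral.integral_add_adjacent_intervals h1 h2]
  have := (hG.add hψ).congr_of_eventuallyEq heq
  rw [add_comm] at this
  exact this

/-- Continuity of a parametric integral with moving upper endpoint. -/
lemma my_param_cont (x₁ x₂ : ℝ) (h : ℝ → ℝ)
    (hhc : ContinuousOn h (Icc x₁ x₂))
    (hhpos : ∀ x ∈ Icc x₁ x₂, 0 < h x)
    (f : ℝ → ℝ → ℝ)
    (hf : ContinuousOn (fun p : ℝ × ℝ => f p.1 p.2) (Icc x₁ x₂ ×ˢ Ici 0)) :
    ContinuousOn (fun x => ∫ y in (0:ℝ)..h x, f x y) (Icc x₁ x₂) := by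
  obtain ⟨M, hM⟩ : ∃ M, ∀ x ∈ Icc x₁ x₂, ‖h x‖ ≤ M :=
    isCompact_Icc.exists_bound_of_continuousOn hhc
  obtain ⟨C, hC⟩ : ∃ C, ∀ p ∈ Icc x₁ x₂ ×ˢ Icc (0:ℝ) M, ‖f p.1 p.2‖ ≤ C :=
    (isCompact_Icc.prod isCompact_Icc).exists_bound_of_continuousOn
      (hf.mono (prod_mono_right Icc_subset_Ici_self))
  have hhM : ∀ x ∈ Icc x₁ x₂, h x ≤ M := fun x hx =>
    le_trans (le_abs_self _) (hM x hx)
  intro x₀ hx₀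
  set c := h x₀ with hc_def
  have hc : 0 < c := hhpos x₀ hx₀
  have hcM : c ≤ M := hhM x₀ hx₀
  have hintf : ∀ x ∈ Icc x₁ x₂, ∀ a b : ℝ, 0 ≤ a → 0 ≤ b →
      IntervalIntegrable (f x) volume a b := by
    intro x hx a b ha hb
    refine ((my_sectionCont f hf hx).mono ?_).intervalIntegrable
    rw [uIcc]
    intro y hy
    exact le_trans (le_min ha hb) hy.1
  have heq : ∀ x ∈ Icc x₁ x₂, (∫ y in (0:ℝ)..h x, f x y)
      = (∫ y in (0:ℝ)..c, f x y) + ∫ y in c..h x, f x y := fun x hx =>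
    (intervalIntegral.integral_add_adjacent_intervals
      (hintf x hx 0 c le_rfl hc.le) (hintf x hx c (h x) hc.le (hhpos x hx).le)).symm
  have hpart1 : ContinuousWithinAt (fun x => ∫ y in (0:ℝ)..c, f x y) (Icc x₁ x₂) x₀ := by
    refine intervalIntegral.continuousWithinAt_of_dominated_interval
      (bound := fun _ => C) ?_ ?_ intervalIntegrable_const ?_
    · filter_upwards [self_mem_nhdsWithin] with x hx
      exact ((my_sectionCont f hf hx).mono (uIoc_of_le hc.le ▸ Ioc_subset_Icc_self.trans
        Icc_subset_Ici_self)).aestronglyMeasurable measurableSet_uIoc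
    · filter_upwards [self_mem_nhdsWithin] with x hx
      refine Filter.Eventually.of_forall fun t => fun ht => ?_
      rw [uIoc_of_le hc.le] at ht
      exact hC (x, t) ⟨hx, ht.1.le, ht.2.trans hcM⟩
    · refine Filter.Eventually.of_forall fun t => fun ht => ?_
      rw [uIoc_of_le hc.le] at ht
      have : (fun x => f x t) = (fun p : ℝ × ℝ => f p.1 p.2) ∘ fun x => (x, t) := rfl
      rw [this]
      exact (hf.comp ((continuous_id.prodMk continuous_const).continuousOn)
        (fun x hx => ⟨hx, ht.1.le⟩)).continuousWithinAt hx₀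
  have hpart2 : ContinuousWithinAt (fun x => ∫ y in c..h x, f x y) (Icc x₁ x₂) x₀ := by
    have hzero : (fun x => ∫ y in c..h x, f x y) x₀ = 0 := intervalIntegral.integral_same
    unfold ContinuousWithinAt
    rw [hzero]
    have hbnd : ∀ᶠ x in 𝓝[Icc x₁ x₂] x₀, ‖∫ y in c..h x, f x y‖ ≤ |C| * |h x - c| := by
      filter_upwards [self_mem_nhdsWithin] with x hx
      have : ∀ y ∈ Ι c (h x), ‖f x y‖ ≤ |C| := by
        intro y hy
        rw [Set.mem_uIoc] at hy
        have hy0 : 0 ≤ y := by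
          rcases hy with ⟨h1, _⟩ | ⟨h1, _⟩
          exacts [hc.le.trans h1.le, (hhpos x hx).le.trans h1.le]
        have hyM : y ≤ M := by
          rcases hy with ⟨_, h2⟩ | ⟨_, h2⟩
          exacts [h2.trans (hhM x hx), h2.trans hcM]
        exact (hC (x, y) ⟨hx, hy0, hyM⟩).trans (le_abs_self C)
      exact intervalIntegral.norm_integral_le_of_norm_le_const this
    have htend : Filter.Tendsto (fun x => |C| * |h x - c|) (𝓝[Icc x₁ x₂] x₀) (𝓝 0) := by
      have h1 : Filter.Tendsto (fun x => h x - c) (𝓝[Icc x₁ x₂] x₀) (𝓝 0) := by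
        have := (hhc x₀ hx₀).sub_const c
        simpa [hc_def] using this
      have := (h1.abs).const_mul |C|
      simpa using this
    exact squeeze_zero_norm' hbnd htend
  exact (hpart1.add hpart2).congr (fun x hx => heq x hx) (heq x₀ hx₀)

/-- Energy conservation for smooth steady frictionless flow: if the steady momentum
equation `d/dx (Q²/A + g I₁) = g I₂ - g A B'` holds on `(x₁, x₂)`, with positive depth and
wetted area, then the energy `E = Q²/(2A²) + g (h + B)` is constant on `[x₁, x₂]`. -/
theorem stmt8 (x₁ x₂ : ℝ) (hx : x₁ < x₂) (g : ℝ) (hg : 0 < g)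
    (B B' h h' : ℝ → ℝ)
    (hBd : ∀ x ∈ Set.Icc x₁ x₂, HasDerivAt B (B' x) x)
    (hB' : ContinuousOn B' (Set.Icc x₁ x₂))
    (hhd : ∀ x ∈ Set.Icc x₁ x₂, HasDerivAt h (h' x) x)
    (hh' : ContinuousOn h' (Set.Icc x₁ x₂))
    (hhpos : ∀ x ∈ Set.Icc x₁ x₂, 0 < h x)
    (σ σx : ℝ → ℝ → ℝ)
    (hσ : ContinuousOn (fun p : ℝ × ℝ => σ p.1 p.2) (Set.Icc x₁ x₂ ×ˢ Set.Ici 0))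
    (hσx : ∀ y ∈ Set.Ici (0 : ℝ), ∀ x ∈ Set.Icc x₁ x₂,
      HasDerivAt (fun t => σ t y) (σx x y) x)
    (hσxc : ContinuousOn (fun p : ℝ × ℝ => σx p.1 p.2) (Set.Icc x₁ x₂ ×ˢ Set.Ici 0))
    (A I₁ I₂ : ℝ → ℝ)
    (hA : ∀ x, A x = ∫ y in (0 : ℝ)..(h x), σ x y)
    (hApos : ∀ x ∈ Set.Icc x₁ x₂, 0 < A x)
    (hI₁ : ∀ x, I₁ x = ∫ y in (0 : ℝ)..(h x), (h x - y) * σ x y)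
    (hI₂ : ∀ x, I₂ x = ∫ y in (0 : ℝ)..(h x), (h x - y) * σx x y)
    (Q : ℝ)
    (hmom : ∀ x ∈ Set.Ioo x₁ x₂,
      HasDerivAt (fun t => Q ^ 2 / A t + g * I₁ t) (g * I₂ x - g * A x * B' x) x) :
    ∀ x ∈ Set.Icc x₁ x₂, ∀ y ∈ Set.Icc x₁ x₂,
      Q ^ 2 / (2 * A x ^ 2) + g * (h x + B x) = Q ^ 2 / (2 * A y ^ 2) + g * (h y + B y) := by
  have hhc : ContinuousOn h (Icc x₁ x₂) := fun x hx => (hhd x hx).continuousAt.continuousWithinAt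
  have hBc : ContinuousOn B (Icc x₁ x₂) := fun x hx => (hBd x hx).continuousAt.continuousWithinAt
  set E : ℝ → ℝ := fun x => Q ^ 2 / (2 * A x ^ 2) + g * (h x + B x) with hE_def
  have hAfun : A = fun x => ∫ y in (0:ℝ)..h x, σ x y := funext hA
  have hAc : ContinuousOn A (Icc x₁ x₂) := by
    rw [hAfun]; exact my_param_cont _ _ h hhc hhpos σ hσ
  have hEc : ContinuousOn E (Icc x₁ x₂) := by
    refine ContinuousOn.add ?_ ?_
    · refine continuousOn_const.div (continuousOn_const.mul (hAc.pow 2)) ?_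
      intro x hx
      have := hApos x hx
      positivity
    · exact continuousOn_const.mul (hhc.add hBc)
  have hAd : ∀ x ∈ Ioo x₁ x₂,
      HasDerivAt A (σ x (h x) * h' x + ∫ y in (0:ℝ)..h x, σx x y) x := by
    intro x hxm
    rw [hAfun]
    exact my_param_hasDerivAt x₁ x₂ h h' hhd hhpos σ σx hσ hσx hσxc x hxm
  have hI₁d : ∀ x ∈ Ioo x₁ x₂, HasDerivAt I₁ (h' x * A x + I₂ x) x := by
    intro x hxm
    have hx' : x ∈ Icc x₁ x₂ := Ioo_subset_Icc_self hxm
    have hI₁fun : I₁ = fun x => ∫ y in (0:ℝ)..h x, (h x - y) * σ x y := funext hI₁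
    rw [hI₁fun]
    have hjf : ContinuousOn (fun p : ℝ × ℝ => (h p.1 - p.2) * σ p.1 p.2)
        (Icc x₁ x₂ ×ˢ Ici 0) :=
      ((hhc.comp continuousOn_fst (fun p hp => hp.1)).sub continuousOn_snd).mul hσ
    have hjfx : ContinuousOn
        (fun p : ℝ × ℝ => h' p.1 * σ p.1 p.2 + (h p.1 - p.2) * σx p.1 p.2)
        (Icc x₁ x₂ ×ˢ Ici 0) :=
      ((hh'.comp continuousOn_fst (fun p hp => hp.1)).mul hσ).add
        (((hhc.comp continuousOn_fst (fun p hp => hp.1)).sub continuousOn_snd).mul hσxc)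
    have hderf : ∀ y ∈ Ici (0:ℝ), ∀ x ∈ Icc x₁ x₂,
        HasDerivAt (fun t => (h t - y) * σ t y)
          (h' x * σ x y + (h x - y) * σx x y) x :=
      fun y hy x hx => ((hhd x hx).sub_const y).mul (hσx y hy x hx)
    have hd := my_param_hasDerivAt x₁ x₂ h h' hhd hhpos
      (fun x y => (h x - y) * σ x y)
      (fun x y => h' x * σ x y + (h x - y) * σx x y)
      hjf hderf hjfx x hxm
    convert hd using 1
    have hsub0 : Set.uIcc (0:ℝ) (h x) ⊆ Ici (0:ℝ) := by
      rw [uIcc_of_le (hhpos x hx').le]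
      exact Icc_subset_Ici_self
    have hint1 : IntervalIntegrable (fun y => h' x * σ x y) volume 0 (h x) :=
      (continuousOn_const.mul ((my_sectionCont σ hσ hx').mono hsub0)).intervalIntegrable
    have hint2 : IntervalIntegrable (fun y => (h x - y) * σx x y) volume 0 (h x) :=
      ((continuousOn_const.sub continuousOn_id).mul
        ((my_sectionCont σx hσxc hx').mono hsub0)).intervalIntegrable
    rw [intervalIntegral.integral_add hint1 hint2, intervalIntegral.integral_const_mul,
      hA x, hI₂ x]
    simp
  have hEd : ∀ x ∈ Ioo x₁ x₂, HasDerivAt E 0 x := by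
    intro x hxm
    have hx' : x ∈ Icc x₁ x₂ := Ioo_subset_Icc_self hxm
    have hA0 : A x ≠ 0 := (hApos x hx').ne'
    set a' := σ x (h x) * h' x + ∫ y in (0:ℝ)..h x, σx x y with ha'
    have hAx := hAd x hxm
    have h1 : HasDerivAt (fun t => Q ^ 2 / A t)
        (g * I₂ x - g * A x * B' x - g * (h' x * A x + I₂ x)) x := by
      have := (hmom x hxm).sub ((hI₁d x hxm).const_mul g)
      refine this.congr_of_eventuallyEq (Filter.Eventually.of_forall fun t => ?_)
      simp
    have h2 : HasDerivAt (fun t => Q ^ 2 / A t) (-(Q ^ 2) * a' / A x ^ 2) x := by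
      have := (hasDerivAt_const x (Q ^ 2)).div hAx hA0
      refine this.congr_deriv (Eq.symm ?_)
      rw [ha']
      ring
    have key : -(Q ^ 2) * a' / A x ^ 2
        = g * I₂ x - g * A x * B' x - g * (h' x * A x + I₂ x) := h2.unique h1
    have key' : Q ^ 2 * a' = g * A x ^ 3 * (B' x + h' x) := by
      have h6 : -(Q ^ 2) * a' / A x ^ 2 = -(g * A x * (B' x + h' x)) := by
        rw [key]; ring
      field_simp at h6
      linarith
    have h3 : HasDerivAt (fun t => Q ^ 2 / (2 * A t ^ 2))
        ((0 * (2 * A x ^ 2) - Q ^ 2 * (2 * (2 * A x ^ 1 * a'))) / (2 * A x ^ 2) ^ 2) x :=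
      (hasDerivAt_const x (Q ^ 2)).div ((hAx.pow 2).const_mul 2)
        (by have := hApos x hx'; positivity)
    have h4 : HasDerivAt (fun t => g * (h t + B t)) (g * (h' x + B' x)) x :=
      ((hhd x hx').add (hBd x hx')).const_mul g
    have h5 := h3.add h4
    refine h5.congr_deriv (Eq.symm ?_)
    field_simp
    rw [ha'] at key'
    linear_combination 2 * key'
  -- constancy
  set m : ℝ := (x₁ + x₂) / 2 with hm_def
  have hm : m ∈ Ioo x₁ x₂ := ⟨by simp [hm_def]; linarith, by simp [hm_def]; linarith⟩
  have hIoo : ∀ a ∈ Ioo x₁ x₂, ∀ b ∈ Ioo x₁ x₂, a ≤ b → E b = E a := by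
    intro a ha b hb hab
    refine constant_of_has_deriv_right_zero
      (hEc.mono (Icc_subset_Icc ha.1.le hb.2.le)) ?_ b (right_mem_Icc.mpr hab)
    intro z hz
    exact (hEd z ⟨lt_of_lt_of_le ha.1 hz.1, lt_trans hz.2 hb.2⟩).hasDerivWithinAt
  have hIoo'' : ∀ a ∈ Ioo x₁ x₂, E a = E m := by
    intro a ha
    rcases le_total a m with hle | hle
    · exact (hIoo a ha m hm hle).symm
    · exact hIoo m hm a ha hle
  have hext : ∀ z ∈ Icc x₁ x₂, E z = E m := by
    intro z hz
    have hne : (𝓝[Ioo x₁ x₂] z).NeBot := by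
      rw [← mem_closure_iff_nhdsWithin_neBot, closure_Ioo hx.ne]
      exact hz
    have t1 : Tendsto E (𝓝[Ioo x₁ x₂] z) (𝓝 (E z)) :=
      (hEc z hz).mono Ioo_subset_Icc_self
    have t2 : Tendsto E (𝓝[Ioo x₁ x₂] z) (𝓝 (E m)) := by
      refine Tendsto.congr' ?_ tendsto_const_nhds
      filter_upwards [self_mem_nhdsWithin] with y hy
      exact (hIoo'' y hy).symm
    exact tendsto_nhds_unique t1 t2
  intro x hxI y hyI
  show E x = E y
  rw [hext x hxI, hext y hyI]
end

section
/- Let x_L < x_R with Δx = x_R − x_L, let h_L, h_R ≥ 0 with Δh = h_R − h_L > 0, and define the linear depth h(x) = h_L + (x − x_L)·Δh/Δx. Let σ_L, σ_R : [0, ∞) → ℝ be continuous, and define the interpolated width σ(x, y) = [σ_R(y)·(x − x_L) + σ_L(y)·(x_R − x)]/Δx. Then for all x₁ ≤ x₂ with x_L ≤ x₁ and x₂ ≤ x_R, setting h₁ = h(x₁) and h₂ = h(x₂), the water volume satisfies ∫_{x₁}^{x₂} ∫₀^{h(x)} σ(x, y) dy dx = [(x₂ − x₁)(2x_R − x₁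 − x₂)/(2Δx)]·∫₀^{h₁} σ_L(y) dy − [(x_R − x₂)²/(2Δx)]·∫_{h₁}^{h₂} σ_L(y) dy + [Δx/(2Δh²)]·∫_{h₁}^{h₂} σ_L(y)·(h_R − y)² dy + [(x₂ − x₁)(x₁ + x₂ − 2x_L)/(2Δx)]·∫₀^{h₁} σ_R(y) dy + [(x₂ − x_L)²/(2Δx)]·∫_{h₁}^{h₂} σ_R(y) dy − [Δx/(2Δh²)]·∫_{h₁}^{h₂} σ_R(y)·(y − h_L)² dy. -/
open intervalIntegral MeasureTheory

lemma aux13 (xL xR : ℝ) (hx : xL < xR)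
    (hL hR : ℝ) (hΔh : hL < hR)
    (σL σR : ℝ → ℝ) (cL : Continuous σL) (cR : Continuous σR)
    (h : ℝ → ℝ) (hh : ∀ x, h x = hL + (x - xL) * (hR - hL) / (xR - xL))
    (x₁ x₂ : ℝ) :
    (∫ x in x₁..x₂, ∫ y in (0 : ℝ)..(h x),
        (σR y * (x - xL) + σL y * (xR - x)) / (xR - xL)) =
      (x₂ - x₁) * (2 * xR - x₁ - x₂) / (2 * (xR - xL)) * (∫ y in (0 : ℝ)..(h x₁), σL y)
      - (xR - x₂) ^ 2 / (2 * (xR - xL)) * (∫ y in (h x₁)..(h x₂), σL y)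
      + (xR - xL) / (2 * (hR - hL) ^ 2) * (∫ y in (h x₁)..(h x₂), σL y * (hR - y) ^ 2)
      + (x₂ - x₁) * (x₁ + x₂ - 2 * xL) / (2 * (xR - xL)) * (∫ y in (0 : ℝ)..(h x₁), σR y)
      + (x₂ - xL) ^ 2 / (2 * (xR - xL)) * (∫ y in (h x₁)..(h x₂), σR y)
      - (xR - xL) / (2 * (hR - hL) ^ 2) * (∫ y in (h x₁)..(h x₂), σR y * (y - hL) ^ 2) := by
  have hΔx : xR - xL ≠ 0 := sub_ne_zero.mpr hx.ne'
  have hΔ : hR - hL ≠ 0 := sub_ne_zero.mpr hΔh.ne'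
  have cSL : Continuous fun u : ℝ => ∫ t in (0:ℝ)..u, σL t :=
    intervalIntegral.continuous_primitive (fun a b => cL.intervalIntegrable a b) 0
  have cSR : Continuous fun u : ℝ => ∫ t in (0:ℝ)..u, σR t :=
    intervalIntegral.continuous_primitive (fun a b => cR.intervalIntegrable a b) 0
  have dSL : ∀ u : ℝ, HasDerivAt (fun v => ∫ t in (0:ℝ)..v, σL t) (σL u) u := fun u =>
    intervalIntegral.integral_hasDerivAt_right (cL.intervalIntegrable _ _)
      (cL.stronglyMeasurable.stronglyMeasurableAtFilter) cL.continuousAt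
  have dSR : ∀ u : ℝ, HasDerivAt (fun v => ∫ t in (0:ℝ)..v, σR t) (σR u) u := fun u =>
    intervalIntegral.integral_hasDerivAt_right (cR.intervalIntegrable _ _)
      (cR.stronglyMeasurable.stronglyMeasurableAtFilter) cR.continuousAt
  have dh : ∀ x : ℝ, HasDerivAt h ((hR - hL) / (xR - xL)) x := by
    intro x
    have hfun : h = fun x => hL + (x - xL) * (hR - hL) / (xR - xL) := funext hh
    rw [hfun]
    simpa using ((((hasDerivAt_id x).sub_const xL).mul_const (hR - hL)).div_const
      (xR - xL)).const_add hL
  -- step 1: inner integral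
  have key : ∀ x : ℝ, (∫ y in (0:ℝ)..(h x), (σR y * (x - xL) + σL y * (xR - x)) / (xR - xL))
      = ((hR - hL) / (xR - xL)) •
        ((fun u => ((∫ t in (0:ℝ)..u, σR t) * (u - hL) + (∫ t in (0:ℝ)..u, σL t) * (hR - u))
            * ((xR - xL) / (hR - hL) ^ 2)) ∘ h) x := by
    intro x
    have e1 : (∫ y in (0:ℝ)..(h x), (σR y * (x - xL) + σL y * (xR - x)) / (xR - xL))
        = ((∫ y in (0:ℝ)..(h x), σR y) * (x - xL) + (∫ y in (0:ℝ)..(h x), σL y) * (xR - x))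
          / (xR - xL) := by
      rw [intervalIntegral.integral_div,
        intervalIntegral.integral_add ((cR.intervalIntegrable _ _).mul_const _)
          ((cL.intervalIntegrable _ _).mul_const _),
        intervalIntegral.integral_mul_const, intervalIntegral.integral_mul_const]
    rw [e1, smul_eq_mul, Function.comp_apply]
    set a := ∫ y in (0:ℝ)..(h x), σR y with ha
    set b := ∫ y in (0:ℝ)..(h x), σL y with hb
    rw [hh x]
    field_simp
    ring
  have hfeq : (fun x => ∫ y in (0:ℝ)..(h x), (σR y * (x - xL) + σL y * (xR - x)) / (xR - xL))
      = fun x => ((hR - hL) / (xR - xL)) •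
        ((fun u => ((∫ t in (0:ℝ)..u, σR t) * (u - hL) + (∫ t in (0:ℝ)..u, σL t) * (hR - u))
            * ((xR - xL) / (hR - hL) ^ 2)) ∘ h) x := funext key
  rw [show (∫ x in x₁..x₂, ∫ y in (0:ℝ)..(h x),
        (σR y * (x - xL) + σL y * (xR - x)) / (xR - xL))
      = ∫ x in x₁..x₂, ((hR - hL) / (xR - xL)) •
        ((fun u => ((∫ t in (0:ℝ)..u, σR t) * (u - hL) + (∫ t in (0:ℝ)..u, σL t) * (hR - u))
            * ((xR - xL) / (hR - hL) ^ 2)) ∘ h) x from by rw [hfeq]]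
  rw [intervalIntegral.integral_comp_smul_deriv (fun x _ => dh x)
    continuousOn_const (by fun_prop)]
  -- now : ∫ u in h x₁..h x₂, (SR u * (u-hL) + SL u * (hR-u)) * c
  rw [intervalIntegral.integral_mul_const,
    intervalIntegral.integral_add
      ((show Continuous (fun u : ℝ => (∫ t in (0:ℝ)..u, σR t) * (u - hL)) from
        cSR.mul (continuous_id.sub continuous_const)).intervalIntegrable _ _)
      ((show Continuous (fun u : ℝ => (∫ t in (0:ℝ)..u, σL t) * (hR - u)) from
        cSL.mul (continuous_const.sub continuous_id)).intervalIntegrable _ _)]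
  -- integration by parts, L part
  have ibpL : (∫ u in (h x₁)..(h x₂), (∫ t in (0:ℝ)..u, σL t) * (hR - u))
      = (∫ t in (0:ℝ)..(h x₂), σL t) * (-(hR - h x₂) ^ 2 / 2)
        - (∫ t in (0:ℝ)..(h x₁), σL t) * (-(hR - h x₁) ^ 2 / 2)
        - ∫ u in (h x₁)..(h x₂), σL u * (-(hR - u) ^ 2 / 2) := by
    apply intervalIntegral.integral_mul_deriv_eq_deriv_mul
      (v := fun t => -(hR - t) ^ 2 / 2) (v' := fun t => hR - t) (fun u _ => dSL u)
    · intro u _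
      have h2 := ((((hasDerivAt_id u).const_sub hR).pow 2).neg).div_const 2
      convert h2 using 1
      simp
      simp only [id, Nat.cast_ofNat, show (2:ℕ) - 1 = 1 from rfl, pow_one]
      ring
    · exact cL.intervalIntegrable _ _
    · exact (by fun_prop : Continuous fun u : ℝ => hR - u).intervalIntegrable _ _
  have ibpR : (∫ u in (h x₁)..(h x₂), (∫ t in (0:ℝ)..u, σR t) * (u - hL))
      = (∫ t in (0:ℝ)..(h x₂), σR t) * ((h x₂ - hL) ^ 2 / 2)
        - (∫ t in (0:ℝ)..(h x₁), σR t) * ((h x₁ - hL) ^ 2 / 2)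
        - ∫ u in (h x₁)..(h x₂), σR u * ((u - hL) ^ 2 / 2) := by
    apply intervalIntegral.integral_mul_deriv_eq_deriv_mul
      (v := fun t => (t - hL) ^ 2 / 2) (v' := fun t => t - hL) (fun u _ => dSR u)
    · intro u _
      have h2 := (((hasDerivAt_id u).sub_const hL).pow 2).div_const 2
      convert h2 using 1
      simp
      simp only [id, Nat.cast_ofNat, show (2:ℕ) - 1 = 1 from rfl, pow_one]
      ring
    · exact cR.intervalIntegrable _ _
    · exact (by fun_prop : Continuous fun u : ℝ => u - hL).intervalIntegrable _ _
  have eL : (∫ u in (h x₁)..(h x₂), σL u * (-(hR - u) ^ 2 / 2))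
      = (∫ u in (h x₁)..(h x₂), σL u * (hR - u) ^ 2) * (-(1/2)) := by
    rw [← intervalIntegral.integral_mul_const]
    exact intervalIntegral.integral_congr fun u _ => by ring
  have eR : (∫ u in (h x₁)..(h x₂), σR u * ((u - hL) ^ 2 / 2))
      = (∫ u in (h x₁)..(h x₂), σR u * (u - hL) ^ 2) * (1/2) := by
    rw [← intervalIntegral.integral_mul_const]
    exact intervalIntegral.integral_congr fun u _ => by ring
  have splitL : (∫ t in (0:ℝ)..(h x₂), σL t)
      = (∫ t in (0:ℝ)..(h x₁), σL t) + ∫ t in (h x₁)..(h x₂), σL t :=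
    (intervalIntegral.integral_add_adjacent_intervals (cL.intervalIntegrable _ _)
      (cL.intervalIntegrable _ _)).symm
  have splitR : (∫ t in (0:ℝ)..(h x₂), σR t)
      = (∫ t in (0:ℝ)..(h x₁), σR t) + ∫ t in (h x₁)..(h x₂), σR t :=
    (intervalIntegral.integral_add_adjacent_intervals (cR.intervalIntegrable _ _)
      (cR.intervalIntegrable _ _)).symm
  rw [ibpR, ibpL, eL, eR, splitL, splitR, hh x₁, hh x₂]
  field_simp
  ring

/-- Equation (13): closed form of the water volume `∫_{x₁}^{x₂} ∫₀^{h(x)} σ(x,y) dy dx` on a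
cell `[x_L, x_R]` with linear depth `h` and linearly interpolated width `σ`. -/
theorem stmt11 (xL xR : ℝ) (hx : xL < xR)
    (hL hR : ℝ) (hhL : 0 ≤ hL) (hhR : 0 ≤ hR) (hΔh : hL < hR)
    (σL σR : ℝ → ℝ)
    (hσL : ContinuousOn σL (Set.Ici 0)) (hσR : ContinuousOn σR (Set.Ici 0))
    (h : ℝ → ℝ) (hh : ∀ x, h x = hL + (x - xL) * (hR - hL) / (xR - xL))
    (σ : ℝ → ℝ → ℝ)
    (hσ : ∀ x y, σ x y = (σR y * (x - xL) + σL y * (xR - x)) / (xR - xL))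
    (x₁ x₂ : ℝ) (h12 : x₁ ≤ x₂) (hx1 : xL ≤ x₁) (hx2 : x₂ ≤ xR) :
    (∫ x in x₁..x₂, ∫ y in (0 : ℝ)..(h x), σ x y) =
      (x₂ - x₁) * (2 * xR - x₁ - x₂) / (2 * (xR - xL)) * (∫ y in (0 : ℝ)..(h x₁), σL y)
      - (xR - x₂) ^ 2 / (2 * (xR - xL)) * (∫ y in (h x₁)..(h x₂), σL y)
      + (xR - xL) / (2 * (hR - hL) ^ 2) * (∫ y in (h x₁)..(h x₂), σL y * (hR - y) ^ 2)
      + (x₂ - x₁) * (x₁ + x₂ - 2 * xL) / (2 * (xR - xL)) * (∫ y in (0 : ℝ)..(h x₁), σR y)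
      + (x₂ - xL) ^ 2 / (2 * (xR - xL)) * (∫ y in (h x₁)..(h x₂), σR y)
      - (xR - xL) / (2 * (hR - hL) ^ 2) * (∫ y in (h x₁)..(h x₂), σR y * (y - hL) ^ 2) := by
  have cτL : Continuous fun y => σL (max y 0) :=
    hσL.comp_continuous (continuous_id.max continuous_const) fun y => le_max_right y 0
  have cτR : Continuous fun y => σR (max y 0) :=
    hσR.comp_continuous (continuous_id.max continuous_const) fun y => le_max_right y 0
  have hmono : ∀ a b : ℝ, a ≤ b → h a ≤ h b := by
    intro a b hab
    rw [hh a, hh b]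
    have : (a - xL) * (hR - hL) / (xR - xL) ≤ (b - xL) * (hR - hL) / (xR - xL) := by
      gcongr
    linarith
  have hpos : ∀ a : ℝ, xL ≤ a → 0 ≤ h a := by
    intro a ha
    rw [hh a]
    have : 0 ≤ (a - xL) * (hR - hL) / (xR - xL) := by
      apply div_nonneg
      · apply mul_nonneg <;> linarith
      · linarith
    linarith
  have h10 : 0 ≤ h x₁ := hpos x₁ hx1
  have h120 : h x₁ ≤ h x₂ := hmono _ _ h12
  -- conversions to the globally continuous truncated functions
  have E1 : (∫ y in (0:ℝ)..(h x₁), σL y) = ∫ y in (0:ℝ)..(h x₁), σL (max y 0) := by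
    apply intervalIntegral.integral_congr
    intro y hy
    rw [Set.uIcc_of_le h10] at hy
    simp only [max_eq_left hy.1]
  have E4 : (∫ y in (0:ℝ)..(h x₁), σR y) = ∫ y in (0:ℝ)..(h x₁), σR (max y 0) := by
    apply intervalIntegral.integral_congr
    intro y hy
    rw [Set.uIcc_of_le h10] at hy
    simp only [max_eq_left hy.1]
  have E2 : (∫ y in (h x₁)..(h x₂), σL y) = ∫ y in (h x₁)..(h x₂), σL (max y 0) := by
    apply intervalIntegral.integral_congr
    intro y hy
    rw [Set.uIcc_of_le h120] at hy
    simp only [max_eq_left (le_trans h10 hy.1)]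
  have E5 : (∫ y in (h x₁)..(h x₂), σR y) = ∫ y in (h x₁)..(h x₂), σR (max y 0) := by
    apply intervalIntegral.integral_congr
    intro y hy
    rw [Set.uIcc_of_le h120] at hy
    simp only [max_eq_left (le_trans h10 hy.1)]
  have E3 : (∫ y in (h x₁)..(h x₂), σL y * (hR - y) ^ 2)
      = ∫ y in (h x₁)..(h x₂), σL (max y 0) * (hR - y) ^ 2 := by
    apply intervalIntegral.integral_congr
    intro y hy
    rw [Set.uIcc_of_le h120] at hy
    simp only [max_eq_left (le_trans h10 hy.1)]
  have E6 : (∫ y in (h x₁)..(h x₂), σR y * (y - hL) ^ 2)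
      = ∫ y in (h x₁)..(h x₂), σR (max y 0) * (y - hL) ^ 2 := by
    apply intervalIntegral.integral_congr
    intro y hy
    rw [Set.uIcc_of_le h120] at hy
    simp only [max_eq_left (le_trans h10 hy.1)]
  have Edbl : (∫ x in x₁..x₂, ∫ y in (0:ℝ)..(h x), σ x y)
      = ∫ x in x₁..x₂, ∫ y in (0:ℝ)..(h x),
          (σR (max y 0) * (x - xL) + σL (max y 0) * (xR - x)) / (xR - xL) := by
    apply intervalIntegral.integral_congr
    intro x hxm
    rw [Set.uIcc_of_le h12] at hxm
    apply intervalIntegral.integral_congr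
    intro y hy
    rw [Set.uIcc_of_le (hpos x (le_trans hx1 hxm.1))] at hy
    simp only [hσ, max_eq_left hy.1]
  rw [Edbl, E1, E2, E3, E4, E5, E6]
  exact aux13 xL xR hx hL hR hΔh (fun y => σL (max y 0)) (fun y => σR (max y 0))
    cτL cτR h hh x₁ x₂
end

section
/- Let x_L < x_R with Δx = x_R − x_L, let h_L, h_R ≥ 0 with Δh = h_R − h_L > 0, and define the linear depth h(x) = h_L + (x − x_L)·Δh/Δx. Let σ_L, σ_R : [0, ∞) → ℝ be continuous, and define the interpolated width σ(x, y) = [σ_R(y)·(x − x_L) + σ_L(y)·(x_R − x)]/Δx, so that (∂σ/∂x)(x, y) = (σ_R(y) − σ_L(y))/Δx. Then for all x₁ ≤ x₂ with x_L ≤ x₁ and x₂ ≤ x_R, setting h₁ = h(x₁) and h₂ = h(x₂), the integrated wall pressure force satisfies ∫_{x₁}^{x₂} ∫₀^{h(x)} (h(x) − y)·(∂σ/∂x)(x, y) dy dx = [(x₂ − x₁)/Δx]·∫₀^{h₁} (σ_R(y) − σ_L(y))·((h₁ + h₂)/2 − y) dy + [1/(2Δh)]·∫_{h₁}^{h₂}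 (σ_R(y) − σ_L(y))·(h₂ − y)² dy. -/
open intervalIntegral

/-- FTC helper: derivative of `s ↦ ∫ y in 0..s, f y` for continuous `f`. -/
lemma hasDerivAt_primitive_of_continuous {f : ℝ → ℝ} (hf : Continuous f) (s : ℝ) :
    HasDerivAt (fun u => ∫ y in (0:ℝ)..u, f y) (f s) s :=
  intervalIntegral.integral_hasDerivAt_right (hf.intervalIntegrable _ _)
    (hf.stronglyMeasurableAtFilter _ _) hf.continuousAt

/-- Equation (15): closed form of the integrated wall pressure force
`∫_{x₁}^{x₂} ∫₀^{h(x)} (h(x)-y) ∂σ/∂x(x,y) dy dx` on a cell `[x_L, x_R]` with linear depth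
`h` and linearly interpolated width, for which `∂σ/∂x = (σ_R - σ_L)/Δx`. -/
theorem stmt12 (xL xR : ℝ) (hx : xL < xR)
    (hL hR : ℝ) (hhL : 0 ≤ hL) (hhR : 0 ≤ hR) (hΔh : hL < hR)
    (σL σR : ℝ → ℝ)
    (hσL : ContinuousOn σL (Set.Ici 0)) (hσR : ContinuousOn σR (Set.Ici 0))
    (h : ℝ → ℝ) (hh : ∀ x, h x = hL + (x - xL) * (hR - hL) / (xR - xL))
    (x₁ x₂ : ℝ) (h12 : x₁ ≤ x₂) (hx1 : xL ≤ x₁) (hx2 : x₂ ≤ xR) :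
    (∫ x in x₁..x₂, ∫ y in (0 : ℝ)..(h x), (h x - y) * ((σR y - σL y) / (xR - xL))) =
      (x₂ - x₁) / (xR - xL) *
        (∫ y in (0 : ℝ)..(h x₁), (σR y - σL y) * ((h x₁ + h x₂) / 2 - y))
      + 1 / (2 * (hR - hL)) * (∫ y in (h x₁)..(h x₂), (σR y - σL y) * (h x₂ - y) ^ 2) := by
  have hΔx : (0:ℝ) < xR - xL := sub_pos.mpr hx
  have hΔxne : (xR - xL) ≠ 0 := ne_of_gt hΔx
  have hΔhpos : (0:ℝ) < hR - hL := sub_pos.mpr hΔh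
  have hΔhne : (hR - hL) ≠ 0 := ne_of_gt hΔhpos
  set m : ℝ := (hR - hL) / (xR - xL) with hmdef
  have hmpos : 0 < m := div_pos hΔhpos hΔx
  -- extend the width difference to a continuous function on all of ℝ
  set g : ℝ → ℝ := fun y => σR (max y 0) - σL (max y 0) with hgdef
  have hmax : Continuous fun y : ℝ => max y 0 := continuous_id.max continuous_const
  have hgcont : Continuous g := by
    have h1 : Continuous fun y : ℝ => σR (max y 0) :=
      hσR.comp_continuous hmax (fun y => Set.mem_Ici.mpr (le_max_right _ _))
    have h2 : Continuous fun y : ℝ => σL (max y 0) :=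
      hσL.comp_continuous hmax (fun y => Set.mem_Ici.mpr (le_max_right _ _))
    exact h1.sub h2
  have hgy : ∀ y : ℝ, 0 ≤ y → σR y - σL y = g y := by
    intro y hy; simp [hgdef, max_eq_left hy]
  -- continuity of auxiliary integrands
  have hc1 : Continuous fun y : ℝ => y * g y := continuous_id.mul hgcont
  have hc2 : Continuous fun y : ℝ => y ^ 2 * g y := (continuous_pow 2).mul hgcont
  -- moments
  set M0 : ℝ → ℝ := fun s => ∫ y in (0:ℝ)..s, g y with hM0def
  set M1 : ℝ → ℝ := fun s => ∫ y in (0:ℝ)..s, y * g y with hM1def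
  set M2 : ℝ → ℝ := fun s => ∫ y in (0:ℝ)..s, y ^ 2 * g y with hM2def
  have hd0 : ∀ s, HasDerivAt M0 (g s) s := fun s =>
    hasDerivAt_primitive_of_continuous hgcont s
  have hd1 : ∀ s, HasDerivAt M1 (s * g s) s := fun s =>
    hasDerivAt_primitive_of_continuous hc1 s
  have hd2 : ∀ s, HasDerivAt M2 (s ^ 2 * g s) s := fun s =>
    hasDerivAt_primitive_of_continuous hc2 s
  have hM0c : Continuous M0 := by
    rw [continuous_iff_continuousAt]; exact fun s => (hd0 s).continuousAt
  have hM1c : Continuous M1 := by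
    rw [continuous_iff_continuousAt]; exact fun s => (hd1 s).continuousAt
  -- expansion lemmas
  have expandG : ∀ s : ℝ, (∫ y in (0:ℝ)..s, (s - y) * g y) = s * M0 s - M1 s := by
    intro s
    have : (∫ y in (0:ℝ)..s, (s - y) * g y)
        = ∫ y in (0:ℝ)..s, (s * g y - y * g y) := by
      apply intervalIntegral.integral_congr; intro y _; ring
    rw [this, intervalIntegral.integral_sub ((show Continuous fun y => s * g y from continuous_const.mul hgcont).intervalIntegrable _ _)
      (hc1.intervalIntegrable _ _), intervalIntegral.integral_const_mul]
  have expandP : ∀ c s : ℝ, (∫ y in (0:ℝ)..s, g y * (c - y)) = c * M0 s - M1 s := by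
    intro c s
    have : (∫ y in (0:ℝ)..s, g y * (c - y))
        = ∫ y in (0:ℝ)..s, (c * g y - y * g y) := by
      apply intervalIntegral.integral_congr; intro y _; ring
    rw [this, intervalIntegral.integral_sub ((show Continuous fun y => c * g y from continuous_const.mul hgcont).intervalIntegrable _ _)
      (hc1.intervalIntegrable _ _), intervalIntegral.integral_const_mul]
  have sub01 : ∀ a b : ℝ, (∫ y in a..b, g y) = M0 b - M0 a := by
    intro a b
    have := intervalIntegral.integral_interval_sub_left (μ := MeasureTheory.volume)
      (hgcont.intervalIntegrable (0:ℝ) b) (hgcont.intervalIntegrable (0:ℝ) a)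
    rw [← this]
  have sub11 : ∀ a b : ℝ, (∫ y in a..b, y * g y) = M1 b - M1 a := by
    intro a b
    have := intervalIntegral.integral_interval_sub_left (μ := MeasureTheory.volume)
      (hc1.intervalIntegrable (0:ℝ) b) (hc1.intervalIntegrable (0:ℝ) a)
    rw [← this]
  have sub21 : ∀ a b : ℝ, (∫ y in a..b, y ^ 2 * g y) = M2 b - M2 a := by
    intro a b
    have := intervalIntegral.integral_interval_sub_left (μ := MeasureTheory.volume)
      (hc2.intervalIntegrable (0:ℝ) b) (hc2.intervalIntegrable (0:ℝ) a)
    rw [← this]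
  have expandQ : ∀ c a b : ℝ, (∫ y in a..b, g y * (c - y) ^ 2)
      = c ^ 2 * (M0 b - M0 a) - 2 * c * (M1 b - M1 a) + (M2 b - M2 a) := by
    intro c a b
    have : (∫ y in a..b, g y * (c - y) ^ 2)
        = ∫ y in a..b, ((c ^ 2 * g y - 2 * c * (y * g y)) + y ^ 2 * g y) := by
      apply intervalIntegral.integral_congr; intro y _; ring
    rw [this, intervalIntegral.integral_add
      ((show Continuous fun y => c ^ 2 * g y - 2 * c * (y * g y) from (continuous_const.mul hgcont).sub (continuous_const.mul hc1)).intervalIntegrable _ _)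
      (hc2.intervalIntegrable _ _),
      intervalIntegral.integral_sub ((show Continuous fun y => c ^ 2 * g y from continuous_const.mul hgcont).intervalIntegrable _ _)
        ((show Continuous fun y => 2 * c * (y * g y) from continuous_const.mul hc1).intervalIntegrable _ _),
      intervalIntegral.integral_const_mul, intervalIntegral.integral_const_mul,
      sub01, sub11, sub21]
  -- properties of h
  have hhc : Continuous h := by
    have : h = fun x => hL + (x - xL) * (hR - hL) / (xR - xL) := funext hh
    rw [this]; fun_prop
  have hhd : ∀ t : ℝ, HasDerivAt h m t := by
    intro t
    have : HasDerivAt (fun x => hL + (x - xL) * (hR - hL) / (xR - xL))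
        ((1 * (hR - hL)) / (xR - xL)) t := by
      exact ((((hasDerivAt_id t).sub_const xL).mul_const (hR - hL)).div_const (xR - xL)).const_add hL
    have heq : h = fun x => hL + (x - xL) * (hR - hL) / (xR - xL) := funext hh
    rw [heq, hmdef]
    convert this using 1; ring
  have hhnn : ∀ x : ℝ, xL ≤ x → 0 ≤ h x := by
    intro x hxx
    rw [hh x]
    have : 0 ≤ (x - xL) * (hR - hL) / (xR - xL) :=
      div_nonneg (mul_nonneg (sub_nonneg.mpr hxx) (le_of_lt hΔhpos)) (le_of_lt hΔx)
    linarith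
  have hrel : ∀ t : ℝ, h t = h x₁ + (t - x₁) * m := by
    intro t; rw [hh t, hh x₁, hmdef]; field_simp; ring
  have hmono : h x₁ ≤ h x₂ := by
    rw [hrel x₂]
    nlinarith [mul_nonneg (sub_nonneg.mpr h12) (le_of_lt hmpos)]
  have h1nn : 0 ≤ h x₁ := hhnn x₁ hx1
  -- the two sides as functions of the right endpoint
  set L : ℝ → ℝ := fun t => ∫ x in x₁..t, (1 / (xR - xL)) * (h x * M0 (h x) - M1 (h x))
    with hLdef
  set Φ : ℝ → ℝ := fun t =>
    (t - x₁) / (xR - xL) * ((h x₁ + h t) / 2 * M0 (h x₁) - M1 (h x₁))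
    + 1 / (2 * (hR - hL)) * ((h t) ^ 2 * (M0 (h t) - M0 (h x₁))
        - 2 * (h t) * (M1 (h t) - M1 (h x₁)) + (M2 (h t) - M2 (h x₁))) with hΦdef
  -- derivative of L
  have hLint : Continuous fun x => (1 / (xR - xL)) * (h x * M0 (h x) - M1 (h x)) :=
    continuous_const.mul (((hhc.mul (hM0c.comp hhc)).sub (hM1c.comp hhc)))
  have hLd : ∀ t : ℝ, HasDerivAt L ((1 / (xR - xL)) * (h t * M0 (h t) - M1 (h t))) t := by
    intro t
    exact intervalIntegral.integral_hasDerivAt_right (hLint.intervalIntegrable _ _)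
      (hLint.stronglyMeasurableAtFilter _ _) hLint.continuousAt
  -- derivative of Φ
  have hΦd : ∀ t : ℝ, HasDerivAt Φ ((1 / (xR - xL)) * (h t * M0 (h t) - M1 (h t))) t := by
    intro t
    have hM0h : HasDerivAt (fun t => M0 (h t)) (g (h t) * m) t := (hd0 (h t)).comp t (hhd t)
    have hM1h : HasDerivAt (fun t => M1 (h t)) (h t * g (h t) * m) t :=
      (hd1 (h t)).comp t (hhd t)
    have hM2h : HasDerivAt (fun t => M2 (h t)) ((h t) ^ 2 * g (h t) * m) t :=
      (hd2 (h t)).comp t (hhd t)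
    have hA : HasDerivAt (fun t => (t - x₁) / (xR - xL)) (1 / (xR - xL)) t := by
      have := ((hasDerivAt_id' t).sub_const x₁).div_const (xR - xL)
      convert this using 1
    have hB : HasDerivAt (fun t => (h x₁ + h t) / 2 * M0 (h x₁) - M1 (h x₁))
        (m / 2 * M0 (h x₁)) t := by
      have := ((((hhd t).const_add (h x₁)).div_const 2).mul_const (M0 (h x₁))).sub_const
        (M1 (h x₁))
      convert this using 1
    have hfirst : HasDerivAt (fun t => (t - x₁) / (xR - xL)
        * ((h x₁ + h t) / 2 * M0 (h x₁) - M1 (h x₁)))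
        (1 / (xR - xL) * ((h x₁ + h t) / 2 * M0 (h x₁) - M1 (h x₁))
          + (t - x₁) / (xR - xL) * (m / 2 * M0 (h x₁))) t := hA.mul hB
    have hsq : HasDerivAt (fun t => (h t) ^ 2) (2 * h t * m) t := by
      have := ((hhd t).fun_pow 2)
      refine this.congr_deriv ?_; ring
    have hT1 : HasDerivAt (fun t => (h t) ^ 2 * (M0 (h t) - M0 (h x₁)))
        (2 * h t * m * (M0 (h t) - M0 (h x₁)) + (h t) ^ 2 * (g (h t) * m)) t :=
      hsq.mul (hM0h.sub_const (M0 (h x₁)))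
    have hT2 : HasDerivAt (fun t => 2 * (h t) * (M1 (h t) - M1 (h x₁)))
        (2 * m * (M1 (h t) - M1 (h x₁)) + 2 * h t * (h t * g (h t) * m)) t := by
      have := ((hhd t).const_mul 2).mul (hM1h.sub_const (M1 (h x₁)))
      exact this
      try ring
    have hT3 : HasDerivAt (fun t => M2 (h t) - M2 (h x₁)) ((h t) ^ 2 * g (h t) * m) t :=
      hM2h.sub_const (M2 (h x₁))
    have hsecond : HasDerivAt (fun t => 1 / (2 * (hR - hL))
        * ((h t) ^ 2 * (M0 (h t) - M0 (h x₁)) - 2 * (h t) * (M1 (h t) - M1 (h x₁))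
            + (M2 (h t) - M2 (h x₁))))
        (1 / (2 * (hR - hL)) * ((2 * h t * m * (M0 (h t) - M0 (h x₁))
            + (h t) ^ 2 * (g (h t) * m))
          - (2 * m * (M1 (h t) - M1 (h x₁)) + 2 * h t * (h t * g (h t) * m))
          + (h t) ^ 2 * g (h t) * m)) t :=
      ((hT1.sub hT2).add hT3).const_mul _
    have htot := hfirst.fun_add hsecond
    rw [hΦdef]
    refine htot.congr_deriv ?_
    rw [hrel t, hmdef]
    field_simp
    ring
  -- L - Φ is constant
  have hkey : ∀ t : ℝ, HasDerivAt (fun t => L t - Φ t) 0 t := by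
    intro t
    have := (hLd t).fun_sub (hΦd t)
    simpa using this
  have hconst : ∀ a b : ℝ, L a - Φ a = L b - Φ b := by
    exact fun a b => is_const_of_deriv_eq_zero
      (fun t => (hkey t).differentiableAt) (fun t => (hkey t).deriv) a b
  have hL1 : L x₁ = 0 := by simp [hLdef]
  have hΦ1 : Φ x₁ = 0 := by simp [hΦdef]
  have hmain : L x₂ = Φ x₂ := by
    have := hconst x₂ x₁
    rw [hL1, hΦ1] at this
    linarith
  -- identify the original LHS with L x₂
  have hLHS : (∫ x in x₁..x₂, ∫ y in (0 : ℝ)..(h x),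
      (h x - y) * ((σR y - σL y) / (xR - xL))) = L x₂ := by
    rw [hLdef]
    apply intervalIntegral.integral_congr
    intro x hxmem
    dsimp only
    rw [Set.uIcc_of_le h12] at hxmem
    have hxnn : 0 ≤ h x := hhnn x (le_trans hx1 hxmem.1)
    have step1 : (∫ y in (0 : ℝ)..(h x), (h x - y) * ((σR y - σL y) / (xR - xL)))
        = ∫ y in (0 : ℝ)..(h x), (1 / (xR - xL)) * ((h x - y) * g y) := by
      apply intervalIntegral.integral_congr
      intro y hy
      dsimp only
      rw [Set.uIcc_of_le hxnn] at hy
      rw [← hgy y hy.1]; ring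
    rw [step1, intervalIntegral.integral_const_mul, expandG]
  -- identify the original RHS with Φ x₂
  have hRHS1 : (∫ y in (0 : ℝ)..(h x₁), (σR y - σL y) * ((h x₁ + h x₂) / 2 - y))
      = (h x₁ + h x₂) / 2 * M0 (h x₁) - M1 (h x₁) := by
    rw [← expandP ((h x₁ + h x₂) / 2) (h x₁)]
    apply intervalIntegral.integral_congr
    intro y hy
    dsimp only
    rw [Set.uIcc_of_le h1nn] at hy
    rw [hgy y hy.1]
  have hRHS2 : (∫ y in (h x₁)..(h x₂), (σR y - σL y) * (h x₂ - y) ^ 2)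
      = (h x₂) ^ 2 * (M0 (h x₂) - M0 (h x₁)) - 2 * (h x₂) * (M1 (h x₂) - M1 (h x₁))
        + (M2 (h x₂) - M2 (h x₁)) := by
    rw [← expandQ (h x₂) (h x₁) (h x₂)]
    apply intervalIntegral.integral_congr
    intro y hy
    dsimp only
    rw [Set.uIcc_of_le hmono] at hy
    rw [hgy y (le_trans h1nn hy.1)]
  rw [hLHS, hRHS1, hRHS2, hmain, hΦdef]
end
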